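/- arXiv:1202.2980 — 5 statements merged into one kernel-verified Lean document; each statement's English description precedes it below -/
import Mathlib

section
/- If σ is continuous on some interval (1−δ, 1] with δ > 0 and σ(1)² ≠ 1, then lim_{t↑1} (V(t) − t) · ∫₀ᵗ 1/(V(s)−s) ds = 0. -/
open Real Filter Topology Set MeasureTheory

private lemma int_inv_one_sub {a b : ℝ} (hb : b < 1) (hab : a ≤ b) :
    ∫ s in a..b, (1 - s)⁻¹ = Real.log (1 - a) - Real.log (1 - b) := by
  have h : ∀ x ∈ Set.uIcc a b, HasDerivAt (fun s => -Real.log (1 - s)) ((1 - x)⁻¹) x := by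
    intro x hx
    rw [Set.uIcc_of_le hab] at hx
    have hx1 : (0:ℝ) < 1 - x := by linarith [hx.2]
    have h1 : HasDerivAt (fun s : ℝ => 1 - s) (-1) x := by
      simpa using (hasDerivAt_id x).const_sub 1
    have h2 := (Real.hasDerivAt_log (ne_of_gt hx1)).comp x h1
    have h3 := h2.neg
    have h4 : (1 - x)⁻¹ = -((1 - x)⁻¹ * -1) := by ring
    rw [h4]
    exact h3
  have hint : IntervalIntegrable (fun x : ℝ => (1 - x)⁻¹) volume a b := by
    apply ContinuousOn.intervalIntegrable
    apply ContinuousOn.inv₀ ((continuous_const.sub continuous_id).continuousOn)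
    intro x hx
    rw [Set.uIcc_of_le hab] at hx
    have hxb : x ≤ b := hx.2
    show (1:ℝ) - x ≠ 0
    intro hcontra
    linarith
  have := intervalIntegral.integral_eq_sub_of_hasDerivAt h hint
  rw [this]; ring

private lemma core_lemma (f : ℝ → ℝ) (t₀ m M : ℝ) (ht₀0 : 0 ≤ t₀) (ht₀1 : t₀ < 1)
    (hm : 0 < m)
    (hlow : ∀ t ∈ Set.Ico t₀ (1:ℝ), m * (1 - t) ≤ f t)
    (hup : ∀ t ∈ Set.Ico t₀ (1:ℝ), f t ≤ M * (1 - t))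
    (hcont : ContinuousOn f (Set.Ico t₀ 1)) :
    Tendsto (fun t => f t * ∫ s in (0:ℝ)..t, 1 / f s) (𝓝[<] (1:ℝ)) (𝓝 0) := by
  have hM : 0 < M := by
    have h1 := hlow t₀ ⟨le_refl _, ht₀1⟩
    have h2 := hup t₀ ⟨le_refl _, ht₀1⟩
    nlinarith
  have hfpos : ∀ s ∈ Set.Ico t₀ (1:ℝ), 0 < f s := fun s hs =>
    lt_of_lt_of_le (by nlinarith [hs.2, hs.1]) (hlow s hs)
  have hIoo : Set.Ioo t₀ (1:ℝ) ∈ 𝓝[<] (1:ℝ) := Ioo_mem_nhdsLT ht₀1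
  by_cases hI : IntervalIntegrable (fun s => 1 / f s) volume 0 t₀
  · set C := ∫ s in (0:ℝ)..t₀, 1 / f s with hC
    have hbound : ∀ᶠ t in 𝓝[<] (1:ℝ),
        ‖f t * ∫ s in (0:ℝ)..t, 1 / f s‖ ≤
          M * (1 - t) * (|C| + (1/m) * (Real.log (1 - t₀) - Real.log (1 - t))) := by
      filter_upwards [hIoo] with t ht
      have ht1 : t < 1 := ht.2
      have ht0 : t₀ ≤ t := ht.1.le
      have hsub : Set.Icc t₀ t ⊆ Set.Ico t₀ 1 := fun s hs => ⟨hs.1, lt_of_le_of_lt hs.2 ht1⟩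
      have hint2 : IntervalIntegrable (fun s => 1 / f s) volume t₀ t := by
        apply ContinuousOn.intervalIntegrable
        rw [Set.uIcc_of_le ht0]
        simp only [one_div]
        exact (hcont.mono hsub).inv₀ (fun s hs => (hfpos s (hsub hs)).ne')
      have hint3 : IntervalIntegrable (fun s : ℝ => (1/m) * (1 - s)⁻¹) volume t₀ t := by
        apply ContinuousOn.intervalIntegrable
        apply ContinuousOn.mul continuousOn_const
        apply ContinuousOn.inv₀ ((continuous_const.sub continuous_id).continuousOn)
        intro s hs
        rw [Set.uIcc_of_le ht0] at hs
        have hst : s ≤ t := hs.2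
        show (1:ℝ) - s ≠ 0
        intro hcontra
        linarith
      have hsplit : (∫ s in (0:ℝ)..t, 1 / f s) = C + ∫ s in t₀..t, 1 / f s := by
        rw [hC]
        exact (intervalIntegral.integral_add_adjacent_intervals hI hint2).symm
      have hIt_nonneg : 0 ≤ ∫ s in t₀..t, 1 / f s :=
        intervalIntegral.integral_nonneg ht0 (fun s hs => by
          have := hfpos s (hsub hs); positivity)
      have hIt_le : (∫ s in t₀..t, 1 / f s) ≤
          (1/m) * (Real.log (1 - t₀) - Real.log (1 - t)) := by
        have hptwise : ∀ s ∈ Set.Icc t₀ t, 1 / f s ≤ (1/m) * (1 - s)⁻¹ := by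
          intro s hs
          have hfs := hfpos s (hsub hs)
          have hs1 : s < 1 := (hsub hs).2
          have hms : 0 < m * (1 - s) := by nlinarith
          have hle := hlow s (hsub hs)
          calc 1 / f s ≤ 1 / (m * (1 - s)) := one_div_le_one_div_of_le hms hle
            _ = (1/m) * (1 - s)⁻¹ := by
                rw [one_div, mul_inv]; ring
        calc (∫ s in t₀..t, 1 / f s) ≤ ∫ s in t₀..t, (1/m) * (1 - s)⁻¹ :=
              intervalIntegral.integral_mono_on ht0 hint2 hint3 hptwise
          _ = (1/m) * ∫ s in t₀..t, (1 - s)⁻¹ := by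
              rw [intervalIntegral.integral_const_mul]
          _ = (1/m) * (Real.log (1 - t₀) - Real.log (1 - t)) := by
              rw [int_inv_one_sub ht1 ht0]
      have hft : 0 ≤ f t := (hfpos t ⟨ht0, ht1⟩).le
      have hfle := hup t ⟨ht0, ht1⟩
      rw [hsplit, Real.norm_eq_abs, abs_mul, abs_of_nonneg hft]
      have h1 : |C + ∫ s in t₀..t, 1 / f s| ≤
          |C| + (1/m) * (Real.log (1 - t₀) - Real.log (1 - t)) := by
        calc |C + ∫ s in t₀..t, 1 / f s| ≤ |C| + |∫ s in t₀..t, 1 / f s| := abs_add_le _ _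
          _ ≤ |C| + (1/m) * (Real.log (1 - t₀) - Real.log (1 - t)) := by
              rw [abs_of_nonneg hIt_nonneg]; linarith
      calc f t * |C + ∫ s in t₀..t, 1 / f s|
          ≤ (M * (1 - t)) * (|C| + (1/m) * (Real.log (1 - t₀) - Real.log (1 - t))) := by
            apply mul_le_mul hfle h1 (abs_nonneg _)
            nlinarith
        _ = M * (1 - t) * (|C| + (1/m) * (Real.log (1 - t₀) - Real.log (1 - t))) := by ring
    have h3 : Tendsto (fun t : ℝ => 1 - t) (𝓝[<] (1:ℝ)) (𝓝 0) := by
      have : Tendsto (fun t : ℝ => 1 - t) (𝓝 (1:ℝ)) (𝓝 (1 - 1)) :=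
        (continuous_const.sub continuous_id).tendsto 1
      rw [sub_self] at this
      exact this.mono_left nhdsWithin_le_nhds
    have h1t : Tendsto (fun t : ℝ => 1 - t) (𝓝[<] (1:ℝ)) (𝓝[>] (0:ℝ)) := by
      rw [tendsto_nhdsWithin_iff]
      refine ⟨h3, ?_⟩
      filter_upwards [self_mem_nhdsWithin] with t ht
      simp only [Set.mem_Iio] at ht
      simp only [Set.mem_Ioi]
      linarith
    have hxlog : Tendsto (fun x : ℝ => Real.log x * x) (𝓝[>] (0:ℝ)) (𝓝 0) := by
      have := tendsto_log_mul_rpow_nhdsGT_zero (one_pos)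
      simpa using this
    have h2 : Tendsto (fun t : ℝ => Real.log (1 - t) * (1 - t)) (𝓝[<] (1:ℝ)) (𝓝 0) :=
      hxlog.comp h1t
    have htend : Tendsto (fun t : ℝ =>
        M * (1 - t) * (|C| + (1/m) * (Real.log (1 - t₀) - Real.log (1 - t))))
        (𝓝[<] (1:ℝ)) (𝓝 0) := by
      have hA : Tendsto (fun t : ℝ =>
          M * ((1 - t) * |C| + (1/m) * ((1 - t) * Real.log (1 - t₀) - Real.log (1 - t) * (1 - t))))
          (𝓝[<] (1:ℝ))
          (𝓝 (M * ((0:ℝ) * |C| + (1/m) * ((0:ℝ) * Real.log (1 - t₀) - 0)))) := by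
        apply Tendsto.const_mul
        apply Tendsto.add
        · exact h3.mul_const _
        · apply Tendsto.const_mul
          exact (h3.mul_const _).sub h2
      have : (M * ((0:ℝ) * |C| + (1/m) * ((0:ℝ) * Real.log (1 - t₀) - 0))) = 0 := by ring
      rw [this] at hA
      refine hA.congr (fun t => by ring)
    exact squeeze_zero_norm' hbound htend
  · refine Tendsto.congr' ?_ tendsto_const_nhds
    filter_upwards [hIoo] with t ht
    have hni : ¬ IntervalIntegrable (fun s => 1 / f s) volume 0 t := by
      intro h
      apply hI
      apply h.mono_set
      rw [Set.uIcc_of_le ht₀0, Set.uIcc_of_le (ht₀0.trans ht.1.le)]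
      exact Set.Icc_subset_Icc le_rfl ht.1.le
    rw [intervalIntegral.integral_undef hni, mul_zero]

/-- If `σ` is continuous on `(1-δ, 1]` for some `δ > 0` and
`σ(1)² ≠ 1`, then `lim_{t↑1} (V(t) - t) · ∫₀ᵗ 1/(V(s)-s) ds = 0`. -/
theorem stmt_3
    (c : ℝ) (hc0 : 0 < c) (hc1 : c ≤ 1)
    (σ : ℝ → ℝ) (hσmeas : Measurable σ) (hσ0 : ∀ t ∈ Icc (0:ℝ) 1, 0 ≤ σ t)
    (V : ℝ → ℝ) (hV : ∀ t, V t = c + ∫ s in (0:ℝ)..t, (σ s) ^ 2)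
    (hVt : ∀ t ∈ Ico (0:ℝ) 1, t < V t) (hV1 : V 1 = 1)
    (δ : ℝ) (hδ : 0 < δ) (hσcont : ContinuousOn σ (Ioc (1 - δ) 1))
    (hσ1 : (σ 1) ^ 2 ≠ 1) :
    Tendsto (fun t => (V t - t) * ∫ s in (0:ℝ)..t, 1 / (V s - s))
      (𝓝[<] (1:ℝ)) (𝓝 0) := by
  by_cases hInt : IntervalIntegrable (fun s => σ s ^ 2) volume 0 1
  · -- σ² is integrable on [0,1] : V is continuous
    have hmono : ∀ u v : ℝ, 0 ≤ u → v ≤ 1 → u ≤ v →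
        IntervalIntegrable (fun s => σ s ^ 2) volume u v := by
      intro u v hu hv huv
      apply hInt.mono_set
      rw [Set.uIcc_of_le huv, Set.uIcc_of_le (by norm_num : (0:ℝ) ≤ 1)]
      exact Set.Icc_subset_Icc hu hv
    have hVcont : ContinuousOn V (Set.Icc 0 1) := by
      have h1 : IntegrableOn (fun s => σ s ^ 2) (Set.uIcc (0:ℝ) 1) volume := by
        rw [Set.uIcc_of_le (by norm_num : (0:ℝ) ≤ 1)]
        exact (intervalIntegrable_iff_integrableOn_Icc_of_le (by norm_num)).mp hInt
      have h2 := intervalIntegral.continuousOn_primitive_interval (μ := volume)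
        (a := (0:ℝ)) (b := 1) (f := fun s => σ s ^ 2) h1
      rw [Set.uIcc_of_le (by norm_num : (0:ℝ) ≤ 1)] at h2
      exact ContinuousOn.congr (continuousOn_const.add h2) (fun t _ => hV t)
    have hkey : ∀ t ∈ Set.Icc (0:ℝ) 1, V t - t = ∫ s in t..1, (1 - σ s ^ 2) := by
      intro t ht
      have hadd := intervalIntegral.integral_add_adjacent_intervals
        (hmono 0 t le_rfl ht.2 ht.1) (hmono t 1 ht.1 le_rfl ht.2)
      have hsub : (∫ s in t..1, (1 - σ s ^ 2)) =
          (∫ s in t..1, (1:ℝ)) - ∫ s in t..1, σ s ^ 2 :=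
        intervalIntegral.integral_sub intervalIntegrable_const (hmono t 1 ht.1 le_rfl ht.2)
      have h1 : (∫ s in t..1, (1:ℝ)) = 1 - t := by simp
      have hV1' := hV 1
      rw [hV1] at hV1'
      have hVt' := hV t
      rw [hsub, h1]
      linarith [hadd]
    set a : ℝ := 1 - σ 1 ^ 2 with ha
    have ha0 : a ≠ 0 := sub_ne_zero.mpr (Ne.symm hσ1)
    have hcw : ContinuousWithinAt (fun s => σ s ^ 2) (Set.Ioc (1-δ) 1) 1 :=
      (hσcont 1 ⟨by linarith, le_refl 1⟩).pow 2
    have hev : ∀ᶠ s in 𝓝[Set.Ioc (1-δ) 1] (1:ℝ), |σ s ^ 2 - σ 1 ^ 2| < |a|/2 := by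
      have habs : 0 < |a| / 2 := by positivity
      have := Metric.tendsto_nhds.mp hcw (|a|/2) habs
      simpa [Real.dist_eq] using this
    obtain ⟨ε', hε', hball⟩ := Metric.mem_nhdsWithin_iff.mp hev
    set η := min (min ε' δ) 1 / 2 with hη
    have hη0 : 0 < η := by
      have h1 : 0 < min ε' δ := lt_min hε' hδ
      have h2 : 0 < min (min ε' δ) 1 := lt_min h1 one_pos
      positivity
    have hηε : η < ε' := by
      have h1 : min (min ε' δ) 1 ≤ ε' := (min_le_left _ _).trans (min_le_left _ _)
      have h2 : 0 < min (min ε' δ) 1 := lt_min (lt_min hε' hδ) one_pos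
      rw [hη]; linarith
    have hηδ : η < δ := by
      have h1 : min (min ε' δ) 1 ≤ δ := (min_le_left _ _).trans (min_le_right _ _)
      have h2 : 0 < min (min ε' δ) 1 := lt_min (lt_min hε' hδ) one_pos
      rw [hη]; linarith
    have hη1 : η ≤ 1/2 := by
      have h1 : min (min ε' δ) 1 ≤ 1 := min_le_right _ _
      rw [hη]; linarith
    have hηsmall : ∀ s ∈ Set.Ioc (1 - η) (1:ℝ), |σ s ^ 2 - σ 1 ^ 2| < |a|/2 := by
      intro s hs
      apply hball
      constructor
      · rw [Metric.mem_ball, Real.dist_eq]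
        have h1 : 1 - s < η := by linarith [hs.1]
        have h2 : s ≤ 1 := hs.2
        rw [abs_sub_comm, abs_of_nonneg (by linarith)]
        linarith
      · exact ⟨by linarith [hs.1], hs.2⟩
    have hbounds : ∀ t ∈ Set.Ico (1 - η/2) (1:ℝ),
        (a - |a|/2) * (1 - t) ≤ V t - t ∧ V t - t ≤ (a + |a|/2) * (1 - t) := by
      intro t ht
      have ht1 : t < 1 := ht.2
      have ht0 : (0:ℝ) ≤ t := by linarith [ht.1]
      have htmem : t ∈ Set.Icc (0:ℝ) 1 := ⟨ht0, ht1.le⟩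
      have hii : IntervalIntegrable (fun s => 1 - σ s ^ 2) volume t 1 :=
        intervalIntegrable_const.sub (hmono t 1 ht0 le_rfl ht1.le)
      have hmemIoc : ∀ s ∈ Set.Icc t 1, s ∈ Set.Ioc (1 - η) (1:ℝ) := by
        intro s hs
        exact ⟨by linarith [hs.1, ht.1], hs.2⟩
      rw [hkey t htmem]
      constructor
      · calc (a - |a|/2) * (1 - t) = ∫ s in t..1, (a - |a|/2) := by
              rw [intervalIntegral.integral_const]; simp [smul_eq_mul]; ring
          _ ≤ ∫ s in t..1, (1 - σ s ^ 2) := by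
              apply intervalIntegral.integral_mono_on ht1.le intervalIntegrable_const hii
              intro s hs
              have := hηsmall s (hmemIoc s hs)
              have h2 := abs_lt.mp this
              rw [ha]
              linarith [h2.1, h2.2]
      · calc (∫ s in t..1, (1 - σ s ^ 2)) ≤ ∫ s in t..1, (a + |a|/2) := by
              apply intervalIntegral.integral_mono_on ht1.le hii intervalIntegrable_const
              intro s hs
              have := hηsmall s (hmemIoc s hs)
              have h2 := abs_lt.mp this
              rw [ha]
              linarith [h2.1, h2.2]
          _ = (a + |a|/2) * (1 - t) := by
              rw [intervalIntegral.integral_const]; simp [smul_eq_mul]; ring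
    have hapos : 0 < a := by
      rcases ha0.lt_or_gt with hneg | hpos
      · exfalso
        have hmem : (1 - η/2) ∈ Set.Ico (0:ℝ) 1 := ⟨by linarith, by linarith⟩
        have h1 := (hbounds (1 - η/2) ⟨le_refl _, by linarith⟩).2
        have h2 := hVt (1 - η/2) hmem
        have habs : |a| = -a := abs_of_neg hneg
        rw [habs] at h1
        nlinarith
      · exact hpos
    have habs : |a| = a := abs_of_pos hapos
    have hmain := core_lemma (fun t => V t - t) (1 - η/2) (a/2) (3*a/2)
      (by linarith) (by linarith) (by linarith)
      (fun t ht => by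
        have h1 := (hbounds t ht).1
        rw [habs] at h1
        have heq : a/2 * (1 - t) = (a - a/2) * (1 - t) := by ring
        linarith)
      (fun t ht => by
        have h1 := (hbounds t ht).2
        rw [habs] at h1
        have heq : 3*a/2 * (1 - t) = (a + a/2) * (1 - t) := by ring
        linarith)
      (by
        have hss : Set.Ico (1 - η/2) (1:ℝ) ⊆ Set.Icc (0:ℝ) 1 :=
          fun s hs => ⟨by linarith [hs.1], hs.2.le⟩
        exact (hVcont.mono hss).sub continuousOn_id)
    exact hmain
  · -- σ² is not integrable on [0,1] : then V ≡ 1 near 1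
    set δ' := min δ 1 / 2 with hδ'
    have hδ'0 : 0 < δ' := by
      have : 0 < min δ 1 := lt_min hδ one_pos
      positivity
    have hδ'δ : δ' < δ := by
      have h1 : min δ 1 ≤ δ := min_le_left _ _
      have h2 : 0 < min δ 1 := lt_min hδ one_pos
      rw [hδ']; linarith
    have hδ'1 : δ' ≤ 1/2 := by
      have h1 : min δ 1 ≤ 1 := min_le_right _ _
      rw [hδ']; linarith
    have hsubset : Set.Icc (1 - δ') 1 ⊆ Set.Ioc (1 - δ) 1 :=
      fun s hs => ⟨by linarith [hs.1], hs.2⟩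
    have hσint : IntervalIntegrable (fun s => σ s ^ 2) volume (1 - δ') 1 := by
      apply ContinuousOn.intervalIntegrable
      rw [Set.uIcc_of_le (by linarith)]
      exact (hσcont.mono hsubset).pow 2
    have hc1' : c = 1 := by
      have h1 := hV 1
      rw [intervalIntegral.integral_undef hInt] at h1
      rw [hV1] at h1
      linarith
    have hVeq : ∀ t ∈ Set.Ico (1 - δ') (1:ℝ), V t = 1 := by
      intro t ht
      have hni : ¬ IntervalIntegrable (fun s => σ s ^ 2) volume 0 t := by
        intro h
        apply hInt
        refine h.trans (hσint.mono_set ?_)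
        rw [Set.uIcc_of_le ht.2.le, Set.uIcc_of_le (by linarith)]
        exact Set.Icc_subset_Icc ht.1 le_rfl
      rw [hV t, intervalIntegral.integral_undef hni, hc1']
      ring
    have hmain := core_lemma (fun t => V t - t) (1 - δ') 1 1
      (by linarith) (by linarith) one_pos
      (fun t ht => by show (1:ℝ) * (1 - t) ≤ V t - t; rw [hVeq t ht]; linarith)
      (fun t ht => by show V t - t ≤ (1:ℝ) * (1 - t); rw [hVeq t ht]; linarith)
      (by
        apply ContinuousOn.congr (f := fun t : ℝ => (1:ℝ) - t)
          ((continuous_const.sub continuous_id).continuousOn)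
        intro t ht
        show V t - t = 1 - t
        rw [hVeq t ht])
    exact hmain
end

section
/- Assume in addition that lim_{t↑1} λ(t)² Λ(t) log(Λ(t)) = 0. Then for every pair x ≠ z in ℝ one has lim_{t↑1} φ(t,x,z) = +∞. -/
open Real Filter Topology Set MeasureTheory

lemma one_sub_tendsto : Tendsto (fun t : ℝ => 1 - t) (𝓝[<] (1:ℝ)) (𝓝[>] 0) := by
  have h1 : Tendsto (fun t : ℝ => 1 - t) (𝓝[<] (1:ℝ)) (𝓝 0) := by
    have h : Continuous (fun t : ℝ => 1 - t) := continuous_const.sub continuous_id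
    have h2 := (h.tendsto (1:ℝ)).mono_left (nhdsWithin_le_nhds (s := Iio (1:ℝ)))
    simpa using h2
  rw [tendsto_nhdsWithin_iff]
  refine ⟨h1, ?_⟩
  filter_upwards [self_mem_nhdsWithin] with t ht
  simp only [mem_Iio] at ht
  simpa using ht
lemma junk_repr (f : ℝ → ℝ) (hf : Measurable f) (hnn : ∀ u, 0 ≤ f u) (s : ℝ) (hs : 0 ≤ s) :
    ∫ u in (0:ℝ)..s, f u = (∫⁻ u in Ioc (0:ℝ) s, ENNReal.ofReal (f u)).toReal := by
  by_cases hint : IntegrableOn f (Ioc (0:ℝ) s) volume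
  · rw [intervalIntegral.integral_of_le hs]
    rw [MeasureTheory.integral_eq_lintegral_of_nonneg_ae]
    · exact Filter.Eventually.of_forall hnn
    · exact hf.aestronglyMeasurable
  · rw [intervalIntegral.integral_undef]
    · have htop : ∫⁻ u in Ioc (0:ℝ) s, ENNReal.ofReal (f u) = ⊤ := by
        by_contra hne
        apply hint
        refine ⟨hf.aestronglyMeasurable, ?_⟩
        rw [hasFiniteIntegral_iff_ofReal (Filter.Eventually.of_forall hnn)]
        exact lt_top_iff_ne_top.2 hne
      rw [htop]; simp
    · rw [intervalIntegrable_iff_integrableOn_Ioc_of_le hs]; exact hint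

lemma W_meas (f : ℝ → ℝ) (hf : Measurable f) :
    Measurable (fun s => (∫⁻ u in Ioc (0:ℝ) s, ENNReal.ofReal (f u)).toReal) := by
  apply ENNReal.measurable_toReal.comp
  apply Monotone.measurable
  intro a b hab
  exact lintegral_mono' (Measure.restrict_mono (Ioc_subset_Ioc_right hab) le_rfl) le_rfl

lemma int_one_sub_inv (a t : ℝ) (hat : a ≤ t) (ht : t < 1) :
    ∫ s in a..t, (1 - s)⁻¹ = Real.log (1 - a) - Real.log (1 - t) := by
  have hne : ∀ s ∈ uIcc a t, (1:ℝ) - s ≠ 0 := by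
    intro s hs
    rw [uIcc_of_le hat] at hs
    have : s ≤ t := hs.2
    intro h; linarith [show s = 1 by linarith]
  have hcont : ContinuousOn (fun s : ℝ => (1 - s)⁻¹) (uIcc a t) :=
    ((continuous_const.sub continuous_id).continuousOn).inv₀ hne
  have hder : ∀ s ∈ uIcc a t, HasDerivAt (fun u : ℝ => -Real.log (1 - u)) ((1 - s)⁻¹) s := by
    intro s hs
    have h1 : HasDerivAt (fun u : ℝ => 1 - u) (-1) s := by
      simpa using (hasDerivAt_id s).const_sub (1:ℝ)
    have h2 := (h1.log (hne s hs)).neg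
    rw [show (1 - s)⁻¹ = -(-1 / (1 - s)) by simp [neg_div]]
    exact h2
  rw [intervalIntegral.integral_eq_sub_of_hasDerivAt hder (hcont.intervalIntegrable)]
  ring

lemma int_one_sub_inv_sq (a t : ℝ) (hat : a ≤ t) (ht : t < 1) :
    ∫ s in a..t, ((1 - s)⁻¹)^2 = (1 - t)⁻¹ - (1 - a)⁻¹ := by
  have hne : ∀ s ∈ uIcc a t, (1:ℝ) - s ≠ 0 := by
    intro s hs
    rw [uIcc_of_le hat] at hs
    have : s ≤ t := hs.2
    intro h; linarith [show s = 1 by linarith]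
  have hcont : ContinuousOn (fun s : ℝ => ((1 - s)⁻¹)^2) (uIcc a t) :=
    (((continuous_const.sub continuous_id).continuousOn).inv₀ hne).pow 2
  have hder : ∀ s ∈ uIcc a t, HasDerivAt (fun u : ℝ => (1 - u)⁻¹) (((1 - s)⁻¹)^2) s := by
    intro s hs
    have h1 : HasDerivAt (fun u : ℝ => 1 - u) (-1) s := by
      simpa using (hasDerivAt_id s).const_sub (1:ℝ)
    have h2 := h1.inv (hne s hs)
    rw [show ((1 - s)⁻¹)^2 = -(-1) / (1 - s)^2 by simp]
    exact h2
  rw [intervalIntegral.integral_eq_sub_of_hasDerivAt hder (hcont.intervalIntegrable)]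

lemma prim_top (f : ℝ → ℝ) (hf : Measurable f) (hnn : ∀ u, 0 ≤ f u)
    (hloc : ∀ t ∈ Ico (0:ℝ) 1, IntervalIntegrable f volume 0 t)
    (hnint : ¬ IntervalIntegrable f volume 0 1) :
    Tendsto (fun t => ∫ u in (0:ℝ)..t, f u) (𝓝[<] (1:ℝ)) atTop := by
  set F : ℝ → ℝ := fun t => ∫ u in (0:ℝ)..t, f u with hF
  have hmono : ∀ a b : ℝ, 0 ≤ a → a ≤ b → b < 1 → F a ≤ F b := by
    intro a b ha hab hb
    have hia : IntervalIntegrable f volume 0 a := hloc a ⟨ha, lt_of_le_of_lt hab hb⟩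
    have hib : IntervalIntegrable f volume 0 b := hloc b ⟨le_trans ha hab, hb⟩
    have hiab : IntervalIntegrable f volume a b := by
      apply hib.mono_set
      rw [uIcc_of_le (le_trans ha hab), uIcc_of_le hab]
      exact Icc_subset_Icc ha le_rfl
    have := intervalIntegral.integral_add_adjacent_intervals hia hiab
    have hnn2 : 0 ≤ ∫ u in a..b, f u :=
      intervalIntegral.integral_nonneg hab (fun u _ => hnn u)
    simp only [hF]; linarith [this]
  have hunbdd : ∀ M : ℝ, ∃ t, 0 ≤ t ∧ t < 1 ∧ M ≤ F t := by
    intro M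
    by_contra hcon
    push_neg at hcon
    -- F t < M for all t in [0,1)
    apply hnint
    rw [intervalIntegrable_iff_integrableOn_Ioc_of_le (by norm_num : (0:ℝ) ≤ 1)]
    refine ⟨hf.aestronglyMeasurable, ?_⟩
    rw [hasFiniteIntegral_iff_ofReal (Filter.Eventually.of_forall (fun u => hnn u))]
    -- bound the lintegral over Ioc 0 1
    set ν : Measure ℝ := volume.withDensity (fun u => ENNReal.ofReal (f u)) with hν
    have hν_apply : ∀ s : Set ℝ, MeasurableSet s → ν s = ∫⁻ u in s, ENNReal.ofReal (f u) := by
      intro s hs; rw [hν, withDensity_apply _ hs]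
    have hseq : Monotone (fun n : ℕ => Ioc (0:ℝ) (1 - 1/(n+1))) := by
      intro m n hmn
      apply Ioc_subset_Ioc_right
      have : (1:ℝ)/(n+1) ≤ 1/(m+1) := by
        apply one_div_le_one_div_of_le
        · positivity
        · push_cast; exact_mod_cast Nat.succ_le_succ hmn
      linarith
    have hunion : (⋃ n : ℕ, Ioc (0:ℝ) (1 - 1/(n+1))) = Ioo (0:ℝ) 1 := by
      ext u
      simp only [mem_iUnion, mem_Ioc, mem_Ioo]
      constructor
      · rintro ⟨n, h1, h2⟩
        refine ⟨h1, lt_of_le_of_lt h2 ?_⟩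
        have : (0:ℝ) < 1/(n+1) := by positivity
        linarith
      · rintro ⟨h1, h2⟩
        obtain ⟨n, hn⟩ := exists_nat_one_div_lt (show (0:ℝ) < 1 - u by linarith)
        exact ⟨n, h1, by linarith⟩
    have htend := tendsto_measure_iUnion_atTop (μ := ν) hseq
    rw [hunion] at htend
    have hbound : ∀ n : ℕ, ν (Ioc (0:ℝ) (1 - 1/(n+1))) ≤ ENNReal.ofReal M := by
      intro n
      have hn1 : (0:ℝ) < 1/(n+1) := by positivity
      have htn : (1:ℝ) - 1/(n+1) < 1 := by linarith
      by_cases htn0 : 0 ≤ (1:ℝ) - 1/(n+1)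
      · have hint : IntervalIntegrable f volume 0 (1 - 1/(n+1)) := hloc _ ⟨htn0, htn⟩
        have hFval := junk_repr f hf hnn (1 - 1/(n+1)) htn0
        have hFM := hcon (1 - 1/(n+1)) htn0 htn
        rw [hν_apply _ measurableSet_Ioc]
        have hfin : ∫⁻ u in Ioc (0:ℝ) (1 - 1/(n+1)), ENNReal.ofReal (f u) < ⊤ := by
          have : IntegrableOn f (Ioc (0:ℝ) (1 - 1/(n+1))) volume :=
            (intervalIntegrable_iff_integrableOn_Ioc_of_le htn0).1 hint
          exact (hasFiniteIntegral_iff_ofReal (Filter.Eventually.of_forall (fun u => hnn u))).1 this.2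
        rw [← ENNReal.ofReal_toReal (ne_of_lt hfin), ← hFval]
        exact ENNReal.ofReal_le_ofReal (le_of_lt hFM)
      · push_neg at htn0
        have : Ioc (0:ℝ) (1 - 1/(n+1)) = ∅ := Ioc_eq_empty (by linarith)
        rw [this]; simp
    have hlim_le : ν (Ioo (0:ℝ) 1) ≤ ENNReal.ofReal M :=
      le_of_tendsto htend (Filter.Eventually.of_forall hbound)
    have hsingle : ν {(1:ℝ)} = 0 := by
      rw [hν_apply _ (measurableSet_singleton 1)]
      rw [MeasureTheory.setLIntegral_measure_zero _ _ (measure_singleton 1)]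
    have hIoc : ν (Ioc (0:ℝ) 1) ≤ ENNReal.ofReal M := by
      have : Ioc (0:ℝ) 1 ⊆ Ioo (0:ℝ) 1 ∪ {1} := by
        intro u hu
        rcases lt_or_eq_of_le hu.2 with h | h
        · exact Or.inl ⟨hu.1, h⟩
        · exact Or.inr (by simp [h])
      calc ν (Ioc (0:ℝ) 1) ≤ ν (Ioo (0:ℝ) 1 ∪ {1}) := measure_mono this
      _ ≤ ν (Ioo (0:ℝ) 1) + ν {1} := measure_union_le _ _
      _ ≤ ENNReal.ofReal M + 0 := by rw [hsingle]; exact add_le_add_left hlim_le 0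
      _ = ENNReal.ofReal M := by simp
    rw [← hν_apply _ measurableSet_Ioc]
    exact lt_of_le_of_lt hIoc (by simp [ENNReal.ofReal_lt_top])
  rw [tendsto_atTop]
  intro M
  obtain ⟨t₀, ht₀0, ht₀1, hMt₀⟩ := hunbdd M
  filter_upwards [Ioo_mem_nhdsLT_of_mem (show (1:ℝ) ∈ Ioc t₀ 1 from ⟨ht₀1, le_rfl⟩)] with t ht
  exact le_trans hMt₀ (hmono t₀ t ht₀0 (le_of_lt ht.1) ht.2)
lemma reduction (lam Lam : ℝ → ℝ) (ℓ : ℝ) (hℓ : 0 < ℓ) (k : ℝ) (hk : 0 < k)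
    (hlampos : ∀ t, 0 < lam t)
    (hLamnn : ∀ᶠ t in 𝓝[<] (1:ℝ), 0 ≤ Lam t)
    (hA : Tendsto (fun t => lam t^2 * (Lam t + ℓ)) (𝓝[<] (1:ℝ)) (𝓝 0))
    (hAlog : Tendsto (fun t => lam t^2 * (Lam t + ℓ) * Real.log (2*(Lam t + ℓ)))
      (𝓝[<] (1:ℝ)) (𝓝 0)) :
    Tendsto (fun t => (Real.sqrt (2*(Lam t+ℓ)))⁻¹ *
      Real.exp (k / (2 * lam t^2 * (Lam t + ℓ)))) (𝓝[<] (1:ℝ)) atTop := by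
  set A : ℝ → ℝ := fun t => lam t^2 * (Lam t + ℓ) with hAdef
  have hApos : ∀ᶠ t in 𝓝[<] (1:ℝ), 0 < A t := by
    filter_upwards [hLamnn] with t ht
    exact mul_pos (pow_pos (hlampos t) 2) (by linarith)
  have hA' : Tendsto A (𝓝[<] (1:ℝ)) (𝓝[>] 0) :=
    tendsto_nhdsWithin_iff.2 ⟨hA, hApos⟩
  have hinv : Tendsto (fun t => (A t)⁻¹) (𝓝[<] (1:ℝ)) atTop :=
    hA'.inv_tendsto_nhdsGT_zero
  have hinv2 : Tendsto (fun t => (A t)⁻¹ * (1/2 : ℝ)) (𝓝[<] (1:ℝ)) atTop :=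
    hinv.atTop_mul_const (by norm_num)
  have hsub : Tendsto (fun t => k - A t * Real.log (2*(Lam t + ℓ))) (𝓝[<] (1:ℝ)) (𝓝 k) := by
    have h0 : Tendsto (fun _ : ℝ => k) (𝓝[<] (1:ℝ)) (𝓝 k) := tendsto_const_nhds
    have := h0.sub hAlog
    simpa using this
  have hE : Tendsto (fun t => (A t)⁻¹ * (1/2 : ℝ) * (k - A t * Real.log (2*(Lam t + ℓ))))
      (𝓝[<] (1:ℝ)) atTop := hinv2.atTop_mul_pos hk hsub
  have hexp : Tendsto
      (fun t => Real.exp ((A t)⁻¹ * (1/2 : ℝ) * (k - A t * Real.log (2*(Lam t + ℓ)))))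
      (𝓝[<] (1:ℝ)) atTop := Real.tendsto_exp_atTop.comp hE
  refine hexp.congr' ?_
  filter_upwards [hApos, hLamnn] with t hAt hLt
  have hL : (0:ℝ) < 2 * (Lam t + ℓ) := by linarith
  have hlam2 : (0:ℝ) < lam t ^ 2 := pow_pos (hlampos t) 2
  have hsqrt : (Real.sqrt (2*(Lam t+ℓ)))⁻¹ = Real.exp (-(Real.log (2*(Lam t+ℓ))/2)) := by
    rw [Real.exp_neg]
    congr 1
    rw [← Real.log_sqrt (le_of_lt hL), Real.exp_log (Real.sqrt_pos.2 hL)]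
  rw [hsqrt, ← Real.exp_add]
  congr 1
  have hAne : lam t ^ 2 * (Lam t + ℓ) ≠ 0 := by
    exact ne_of_gt hAt
  have h1 : lam t ^ 2 ≠ 0 := ne_of_gt hlam2
  have h2 : Lam t + ℓ ≠ 0 := by positivity
  simp only [hAdef]
  have h0 : lam t ≠ 0 := ne_of_gt (hlampos t)
  field_simp
  ring
lemma from_atTop (lam Lam : ℝ → ℝ) (ℓ : ℝ) (hℓ : 0 < ℓ)
    (hlampos : ∀ t, 0 < lam t)
    (hLaminf : Tendsto Lam (𝓝[<] (1:ℝ)) atTop)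
    (hlim : Tendsto (fun t => lam t ^ 2 * Lam t * Real.log (Lam t)) (𝓝[<] (1:ℝ)) (𝓝 0)) :
    Tendsto (fun t => lam t^2 * (Lam t + ℓ)) (𝓝[<] (1:ℝ)) (𝓝 0) ∧
    Tendsto (fun t => lam t^2 * (Lam t + ℓ) * Real.log (2*(Lam t + ℓ)))
      (𝓝[<] (1:ℝ)) (𝓝 0) := by
  have hev : ∀ᶠ t in 𝓝[<] (1:ℝ), max (Real.exp 1) (max (2*ℓ) 3) ≤ Lam t :=
    hLaminf.eventually_ge_atTop _
  have hlog1 : ∀ᶠ t in 𝓝[<] (1:ℝ), 1 ≤ Real.log (Lam t) := by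
    filter_upwards [hev] with t ht
    have h1 : Real.exp 1 ≤ Lam t := le_trans (le_max_left _ _) ht
    calc (1:ℝ) = Real.log (Real.exp 1) := (Real.log_exp 1).symm
    _ ≤ Real.log (Lam t) := Real.log_le_log (Real.exp_pos 1) h1
  have hfacts : ∀ᶠ t in 𝓝[<] (1:ℝ),
      3 ≤ Lam t ∧ 2*ℓ ≤ Lam t ∧ 1 ≤ Real.log (Lam t) := by
    filter_upwards [hev, hlog1] with t ht hl
    exact ⟨le_trans (le_trans (le_max_right _ _) (le_max_right _ _)) ht,
      le_trans (le_trans (le_max_left _ _) (le_max_right _ _)) ht, hl⟩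
  -- B := lam^2 * Lam tends to 0
  have hB : Tendsto (fun t => lam t^2 * Lam t) (𝓝[<] (1:ℝ)) (𝓝 0) := by
    refine tendsto_of_tendsto_of_tendsto_of_le_of_le' tendsto_const_nhds hlim ?_ ?_
    · filter_upwards [hfacts] with t ⟨h3, h2l, hl⟩
      have : (0:ℝ) ≤ Lam t := by linarith
      positivity
    · filter_upwards [hfacts] with t ⟨h3, h2l, hl⟩
      have hBnn : (0:ℝ) ≤ lam t^2 * Lam t := by
        have : (0:ℝ) ≤ Lam t := by linarith
        positivity
      nlinarith
  -- lam^2 tends to 0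
  have hlam2 : Tendsto (fun t => lam t^2) (𝓝[<] (1:ℝ)) (𝓝 0) := by
    refine tendsto_of_tendsto_of_tendsto_of_le_of_le' tendsto_const_nhds hB ?_ ?_
    · filter_upwards with t; positivity
    · filter_upwards [hfacts] with t ⟨h3, h2l, hl⟩
      nlinarith [sq_nonneg (lam t)]
  have hA : Tendsto (fun t => lam t^2 * (Lam t + ℓ)) (𝓝[<] (1:ℝ)) (𝓝 0) := by
    have := hB.add (hlam2.mul_const ℓ)
    norm_num at this
    refine this.congr (fun t => ?_)
    ring
  refine ⟨hA, ?_⟩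
  have hup : Tendsto (fun t => 3 * (lam t^2 * Lam t * Real.log (Lam t))) (𝓝[<] (1:ℝ)) (𝓝 0) := by
    have := hlim.const_mul (3:ℝ)
    simpa using this
  refine tendsto_of_tendsto_of_tendsto_of_le_of_le' tendsto_const_nhds hup ?_ ?_
  · filter_upwards [hfacts] with t ⟨h3, h2l, hl⟩
    have h1 : (0:ℝ) ≤ lam t^2 * (Lam t + ℓ) := by positivity
    have h2 : (0:ℝ) ≤ Real.log (2*(Lam t + ℓ)) := by
      apply Real.log_nonneg; linarith
    positivity
  · filter_upwards [hfacts] with t ⟨h3, h2l, hl⟩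
    have hLpos : (0:ℝ) < Lam t := by linarith
    have hkey : Real.log (2*(Lam t + ℓ)) ≤ 2 * Real.log (Lam t) := by
      have h2L : 2*(Lam t + ℓ) ≤ Lam t ^ 2 := by nlinarith
      calc Real.log (2*(Lam t + ℓ)) ≤ Real.log (Lam t ^ 2) :=
            Real.log_le_log (by linarith) h2L
      _ = 2 * Real.log (Lam t) := by
            rw [Real.log_pow]; push_cast; ring
    have hAle : lam t^2 * (Lam t + ℓ) ≤ (3/2) * (lam t^2 * Lam t) := by nlinarith [sq_nonneg (lam t)]
    have hAnn : (0:ℝ) ≤ lam t^2 * (Lam t + ℓ) := by positivity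
    have hlognn : (0:ℝ) ≤ Real.log (2*(Lam t + ℓ)) := Real.log_nonneg (by linarith)
    have hBnn : (0:ℝ) ≤ lam t^2 * Lam t := by positivity
    calc lam t^2 * (Lam t + ℓ) * Real.log (2*(Lam t + ℓ))
        ≤ (3/2) * (lam t^2 * Lam t) * (2 * Real.log (Lam t)) := by
          apply mul_le_mul hAle hkey hlognn
          positivity
    _ = 3 * (lam t^2 * Lam t * Real.log (Lam t)) := by ring

/-- Assume in addition that `lim_{t↑1} λ(t)² Λ(t) log(Λ(t)) = 0`.
Then for every pair `x ≠ z` in `ℝ` one has `lim_{t↑1} φ(t,x,z) = +∞`. -/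
theorem stmt_5
    (c : ℝ) (hc0 : 0 < c) (hc1 : c ≤ 1)
    (σ : ℝ → ℝ) (hσmeas : Measurable σ) (hσ0 : ∀ t ∈ Icc (0:ℝ) 1, 0 ≤ σ t)
    (V : ℝ → ℝ) (hV : ∀ t, V t = c + ∫ s in (0:ℝ)..t, (σ s) ^ 2)
    (hVt : ∀ t ∈ Ico (0:ℝ) 1, t < V t) (hV1 : V 1 = 1)
    (lam : ℝ → ℝ)
    (hlam : ∀ t, lam t = Real.exp (-(∫ s in (0:ℝ)..t, 1 / (V s - s))))
    (Lam : ℝ → ℝ)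
    (hLam : ∀ t, Lam t = ∫ s in (0:ℝ)..t, (1 + (σ s) ^ 2) / (lam s) ^ 2)
    (ℓ : ℝ) (hℓ : 0 < ℓ)
    (φ : ℝ → ℝ → ℝ → ℝ)
    (hφ : ∀ t x z, φ t x z =
      (Real.sqrt (2 * (Lam t + ℓ)))⁻¹ *
        Real.exp ((x - z) ^ 2 / (2 * (lam t) ^ 2 * (Lam t + ℓ))))
    (hlim : Tendsto (fun t => (lam t) ^ 2 * Lam t * Real.log (Lam t))
      (𝓝[<] (1:ℝ)) (𝓝 0)) :
    ∀ x z : ℝ, x ≠ z →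
      Tendsto (fun t => φ t x z) (𝓝[<] (1:ℝ)) atTop := by
  have hlampos : ∀ t, 0 < lam t := fun t => by rw [hlam]; exact Real.exp_pos _
  have hgnn : ∀ s, 0 ≤ (1 + σ s ^ 2) / lam s ^ 2 :=
    fun s => div_nonneg (by positivity) (sq_nonneg _)
  have hmem : Ioo (0:ℝ) 1 ∈ 𝓝[<] (1:ℝ) :=
    Ioo_mem_nhdsLT_of_mem ⟨zero_lt_one, le_rfl⟩
  have hLamnn : ∀ᶠ t in 𝓝[<] (1:ℝ), 0 ≤ Lam t := by
    filter_upwards [hmem] with t ht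
    rw [hLam]
    exact intervalIntegral.integral_nonneg ht.1.le (fun u _ => hgnn u)
  suffices hmain :
      Tendsto (fun t => lam t^2 * (Lam t + ℓ)) (𝓝[<] (1:ℝ)) (𝓝 0) ∧
      Tendsto (fun t => lam t^2 * (Lam t + ℓ) * Real.log (2*(Lam t + ℓ)))
        (𝓝[<] (1:ℝ)) (𝓝 0) by
    intro x z hxz
    have hk : 0 < (x - z)^2 := pow_two_pos_of_ne_zero (sub_ne_zero.2 hxz)
    have hred := reduction lam Lam ℓ hℓ _ hk hlampos hLamnn hmain.1 hmain.2
    exact hred.congr (fun t => (hφ t x z).symm)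
  -- main analysis
  by_cases hI : ∀ t ∈ Ico (0:ℝ) 1, IntervalIntegrable (fun s => σ s ^ 2) volume 0 t
  · -- Case I : σ² locally integrable on [0,1)
    have hVcont : ∀ t ∈ Ico (0:ℝ) 1, ContinuousOn V (Icc 0 t) := by
      intro t ht
      have hInt : IntegrableOn (fun s => σ s ^ 2) (uIcc (0:ℝ) t) volume := by
        rw [uIcc_of_le ht.1]
        exact (intervalIntegrable_iff_integrableOn_Icc_of_le ht.1).1 (hI t ht)
      have hcontF := intervalIntegral.continuousOn_primitive_interval hInt
      rw [uIcc_of_le ht.1] at hcontF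
      exact (continuousOn_const.add hcontF).congr (fun s _ => hV s)
    have hint_h : ∀ t ∈ Ico (0:ℝ) 1,
        IntervalIntegrable (fun s => 1/(V s - s)) volume 0 t := by
      intro t ht
      apply ContinuousOn.intervalIntegrable
      rw [uIcc_of_le ht.1]
      apply continuousOn_const.div ((hVcont t ht).sub continuousOn_id)
      intro s hs
      exact ne_of_gt (sub_pos.2 (hVt s ⟨hs.1, lt_of_le_of_lt hs.2 ht.2⟩))
    have hlamcont : ∀ t ∈ Ico (0:ℝ) 1, ContinuousOn lam (Icc 0 t) := by
      intro t ht
      have hInth : IntegrableOn (fun s => 1/(V s - s)) (uIcc (0:ℝ) t) volume := by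
        rw [uIcc_of_le ht.1]
        exact (intervalIntegrable_iff_integrableOn_Icc_of_le ht.1).1 (hint_h t ht)
      have hcontF := intervalIntegral.continuousOn_primitive_interval hInth
      rw [uIcc_of_le ht.1] at hcontF
      exact (Real.continuous_exp.comp_continuousOn hcontF.neg).congr (fun s _ => hlam s)
    have hg_int : ∀ t ∈ Ico (0:ℝ) 1,
        IntervalIntegrable (fun s => (1 + σ s ^ 2)/lam s ^ 2) volume 0 t := by
      intro t ht
      rw [intervalIntegrable_iff_integrableOn_Icc_of_le ht.1]
      have h1 : ContinuousOn (fun s => (lam s ^ 2)⁻¹) (Icc (0:ℝ) t) :=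
        ((hlamcont t ht).pow 2).inv₀ (fun s _ => ne_of_gt (pow_pos (hlampos s) 2))
      have h2 : IntegrableOn (fun s => 1 + σ s ^ 2) (Icc (0:ℝ) t) volume := by
        rw [← intervalIntegrable_iff_integrableOn_Icc_of_le ht.1]
        exact intervalIntegrable_const.add (hI t ht)
      have h3 := MeasureTheory.IntegrableOn.continuousOn_mul h1 h2 isCompact_Icc
      apply h3.congr_fun ?_ measurableSet_Icc
      intro s _
      simp only [div_eq_mul_inv, mul_comm]
    by_cases hI1 : IntervalIntegrable (fun s => σ s ^ 2) volume 0 1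
    · -- I.a : σ² integrable on [0,1]
      have hVle1 : ∀ s, 0 ≤ s → s ≤ 1 → V s ≤ 1 := by
        intro s hs0 hs1
        have hsi : IntervalIntegrable (fun u => σ u ^ 2) volume 0 s := by
          apply hI1.mono_set
          rw [uIcc_of_le hs0, uIcc_of_le zero_le_one]
          exact Icc_subset_Icc le_rfl hs1
        have hsi2 : IntervalIntegrable (fun u => σ u ^ 2) volume s 1 := by
          apply hI1.mono_set
          rw [uIcc_of_le hs1, uIcc_of_le zero_le_one]
          exact Icc_subset_Icc hs0 le_rfl
        have hsplit := intervalIntegral.integral_add_adjacent_intervals hsi hsi2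
        have hnn2 : 0 ≤ ∫ u in s..1, σ u ^ 2 :=
          intervalIntegral.integral_nonneg hs1 (fun u _ => sq_nonneg _)
        have hV1' := hV 1
        rw [hV1] at hV1'
        rw [hV s]
        linarith
      have hlamle : ∀ s, s ∈ Ico (0:ℝ) 1 → lam s ≤ 1 - s := by
        intro s hs
        have h1s : (0:ℝ) < 1 - s := by linarith [hs.2]
        have hcontinv : ContinuousOn (fun u : ℝ => (1 - u)⁻¹) (uIcc 0 s) := by
          rw [uIcc_of_le hs.1]
          apply ((continuous_const.sub continuous_id).continuousOn).inv₀
          intro u hu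
          have : u < 1 := lt_of_le_of_lt hu.2 hs.2
          simp only [Pi.sub_apply, id_eq]
          intro hcon
          linarith
        have hcomp : ∫ u in (0:ℝ)..s, (1 - u)⁻¹ ≤ ∫ u in (0:ℝ)..s, 1/(V u - u) := by
          apply intervalIntegral.integral_mono_on hs.1 hcontinv.intervalIntegrable
            (hint_h s hs)
          intro u hu
          have hu1 : u < 1 := lt_of_le_of_lt hu.2 hs.2
          have hpos : 0 < V u - u := sub_pos.2 (hVt u ⟨hu.1, hu1⟩)
          have hle : V u - u ≤ 1 - u := by
            have := hVle1 u hu.1 (le_of_lt hu1); linarith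
          rw [one_div]
          exact inv_anti₀ hpos hle
        have hval : ∫ u in (0:ℝ)..s, (1 - u)⁻¹ = - Real.log (1 - s) := by
          rw [int_one_sub_inv 0 s hs.1 hs.2]; simp
        rw [hlam s]
        calc Real.exp (-(∫ u in (0:ℝ)..s, 1/(V u - u)))
            ≤ Real.exp (Real.log (1 - s)) := by
              apply Real.exp_le_exp.2
              rw [hval] at hcomp
              linarith
        _ = 1 - s := Real.exp_log h1s
      have hLlb : ∀ t, t ∈ Ico (0:ℝ) 1 → (1 - t)⁻¹ - 1 ≤ Lam t := by
        intro t ht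
        have hcont2 : ContinuousOn (fun u : ℝ => ((1 - u)⁻¹)^2) (uIcc 0 t) := by
          rw [uIcc_of_le ht.1]
          apply ContinuousOn.pow
          apply ((continuous_const.sub continuous_id).continuousOn).inv₀
          intro u hu
          have : u < 1 := lt_of_le_of_lt hu.2 ht.2
          simp only [Pi.sub_apply, id_eq]
          intro hcon
          linarith
        have hcomp := intervalIntegral.integral_mono_on ht.1 hcont2.intervalIntegrable
          (hg_int t ht) ?_
        · rw [int_one_sub_inv_sq 0 t ht.1 ht.2] at hcomp
          rw [hLam]
          simpa using hcomp
        · intro u hu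
          have hu1 : u < 1 := lt_of_le_of_lt hu.2 ht.2
          have h1u : (0:ℝ) < 1 - u := by linarith
          have hlu := hlamle u ⟨hu.1, hu1⟩
          have hlp := hlampos u
          rw [le_div_iff₀ (pow_pos hlp 2)]
          have hsq : lam u^2 ≤ (1-u)^2 := by nlinarith
          calc ((1-u)⁻¹)^2 * lam u^2 ≤ ((1-u)⁻¹)^2 * (1-u)^2 :=
                mul_le_mul_of_nonneg_left hsq (sq_nonneg _)
          _ = 1 := by rw [← mul_pow, inv_mul_cancel₀ (ne_of_gt h1u)]; norm_num
          _ ≤ 1 + σ u ^ 2 := by nlinarith [sq_nonneg (σ u)]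
      have hLaminf : Tendsto Lam (𝓝[<] (1:ℝ)) atTop := by
        have hbase : Tendsto (fun t : ℝ => (1 - t)⁻¹ + (-1)) (𝓝[<] (1:ℝ)) atTop :=
          tendsto_atTop_add_const_right _ _ one_sub_tendsto.inv_tendsto_nhdsGT_zero
        apply tendsto_atTop_mono' _ ?_ hbase
        filter_upwards [hmem] with t ht
        have := hLlb t ⟨ht.1.le, ht.2⟩
        linarith
      exact from_atTop lam Lam ℓ hℓ hlampos hLaminf hlim
    · -- I.b : σ² not integrable on [0,1]
      have hc1' : c = 1 := by
        have h1 := hV 1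
        rw [intervalIntegral.integral_undef hI1, hV1] at h1
        linarith
      have hlamle1 : ∀ s, s ∈ Ico (0:ℝ) 1 → lam s ≤ 1 := by
        intro s hs
        rw [hlam, Real.exp_le_one_iff]
        have : 0 ≤ ∫ u in (0:ℝ)..s, 1/(V u - u) :=
          intervalIntegral.integral_nonneg hs.1 (fun u hu =>
            one_div_nonneg.2 (le_of_lt (sub_pos.2
              (hVt u ⟨hu.1, lt_of_le_of_lt hu.2 hs.2⟩))))
        linarith
      have hLlb : ∀ t, t ∈ Ico (0:ℝ) 1 → (∫ u in (0:ℝ)..t, σ u ^ 2) ≤ Lam t := by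
        intro t ht
        rw [hLam]
        apply intervalIntegral.integral_mono_on ht.1 (hI t ht) (hg_int t ht)
        intro u hu
        have hu' : u ∈ Ico (0:ℝ) 1 := ⟨hu.1, lt_of_le_of_lt hu.2 ht.2⟩
        have hl1 := hlamle1 u hu'
        have hlp := hlampos u
        have hlsq : lam u ^ 2 ≤ 1 := by nlinarith
        rw [le_div_iff₀ (pow_pos hlp 2)]
        nlinarith [sq_nonneg (σ u)]
      have hσtop := prim_top (fun s => σ s ^ 2) (hσmeas.pow_const 2)
        (fun u => sq_nonneg _) hI hI1
      have hLaminf : Tendsto Lam (𝓝[<] (1:ℝ)) atTop := by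
        apply tendsto_atTop_mono' _ ?_ hσtop
        filter_upwards [hmem] with t ht
        exact hLlb t ⟨ht.1.le, ht.2⟩
      exact from_atTop lam Lam ℓ hℓ hlampos hLaminf hlim
  · -- Case II : σ² not locally integrable
    push_neg at hI
    obtain ⟨t₁, ht₁, hnint⟩ := hI
    have hnint_ge : ∀ t, t₁ ≤ t → ¬ IntervalIntegrable (fun s => σ s ^ 2) volume 0 t := by
      intro t h hcon
      apply hnint
      apply hcon.mono_set
      rw [uIcc_of_le ht₁.1, uIcc_of_le (le_trans ht₁.1 h)]
      exact Icc_subset_Icc le_rfl h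
    have hc1' : c = 1 := by
      by_contra hne
      have hclt : c < 1 := lt_of_le_of_ne hc1 hne
      set t := max t₁ ((c+1)/2) with htdef
      have ht1le : t₁ ≤ t := le_max_left _ _
      have hct : (c+1)/2 ≤ t := le_max_right _ _
      have htlt : t < 1 := max_lt ht₁.2 (by linarith)
      have ht0 : (0:ℝ) ≤ t := le_trans ht₁.1 ht1le
      have hVt' := hVt t ⟨ht0, htlt⟩
      rw [hV t, intervalIntegral.integral_undef (hnint_ge t ht1le)] at hVt'
      linarith
    have hVeq1 : ∀ s, t₁ ≤ s → s < 1 → V s = 1 := by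
      intro s h1 h2
      rw [hV s, intervalIntegral.integral_undef (hnint_ge s h1), hc1']
      ring
    have hVge1 : ∀ s, s ∈ Ico (0:ℝ) 1 → 1 ≤ V s := by
      intro s hs
      rw [hV s, hc1']
      have : 0 ≤ ∫ u in (0:ℝ)..s, σ u ^ 2 :=
        intervalIntegral.integral_nonneg hs.1 (fun u _ => sq_nonneg _)
      linarith
    set W : ℝ → ℝ :=
      fun s => c + (∫⁻ u in Ioc (0:ℝ) s, ENNReal.ofReal (σ u ^ 2)).toReal with hWdef
    have hWmeas : Measurable W := measurable_const.add (W_meas _ (hσmeas.pow_const 2))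
    have hVW : ∀ s, 0 ≤ s → V s = W s := by
      intro s hs
      rw [hV s, junk_repr _ (hσmeas.pow_const 2) (fun u => sq_nonneg _) s hs]
    have hint_h : ∀ t, t ∈ Ico (0:ℝ) 1 →
        IntervalIntegrable (fun s => 1/(V s - s)) volume 0 t := by
      intro t ht
      rw [intervalIntegrable_iff_integrableOn_Ioc_of_le ht.1]
      have hbase : Measurable (fun s => 1/(W s - s)) :=
        measurable_const.div (hWmeas.sub measurable_id)
      have h4 : IntegrableOn (fun s => 1/(W s - s)) (Ioc (0:ℝ) t) volume := by
        apply Measure.integrableOn_of_bounded (M := (1 - t)⁻¹) measure_Ioc_lt_top.ne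
          hbase.aestronglyMeasurable
        rw [ae_restrict_iff' measurableSet_Ioc]
        apply Filter.Eventually.of_forall
        intro s hs
        have hs1 : s < 1 := lt_of_le_of_lt hs.2 ht.2
        have hVWs := hVW s (le_of_lt hs.1)
        have hge := hVge1 s ⟨le_of_lt hs.1, hs1⟩
        have hpos : 0 < V s - s := sub_pos.2 (hVt s ⟨le_of_lt hs.1, hs1⟩)
        rw [← hVWs]
        have h1t : (0:ℝ) < 1 - t := by linarith [ht.2]
        rw [Real.norm_eq_abs, abs_of_nonneg (by positivity : (0:ℝ) ≤ 1/(V s - s)), one_div]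
        apply inv_anti₀ h1t
        linarith [hs.2]
      apply h4.congr_fun ?_ measurableSet_Ioc
      intro s hs
      simp only [hVW s (le_of_lt hs.1)]
    have hlam_bd : ∀ t, t ∈ Ico t₁ 1 → lam t ≤ (1 - t)/(1 - t₁) := by
      intro t ht
      have ht0 : (0:ℝ) ≤ t := le_trans ht₁.1 ht.1
      have hi0t := hint_h t ⟨ht0, ht.2⟩
      have hi0t₁ := hint_h t₁ ht₁
      have hit₁t : IntervalIntegrable (fun s => 1/(V s - s)) volume t₁ t := by
        apply hi0t.mono_set
        rw [uIcc_of_le ht.1, uIcc_of_le ht0]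
        exact Icc_subset_Icc ht₁.1 le_rfl
      have hsplit := intervalIntegral.integral_add_adjacent_intervals hi0t₁ hit₁t
      have h1 : 0 ≤ ∫ s in (0:ℝ)..t₁, 1/(V s - s) :=
        intervalIntegral.integral_nonneg ht₁.1 (fun u hu =>
          one_div_nonneg.2 (le_of_lt (sub_pos.2
            (hVt u ⟨hu.1, lt_of_le_of_lt hu.2 ht₁.2⟩))))
      have h2 : ∫ s in t₁..t, 1/(V s - s) = Real.log (1 - t₁) - Real.log (1 - t) := by
        rw [← int_one_sub_inv t₁ t ht.1 ht.2]
        apply intervalIntegral.integral_congr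
        intro s hs
        rw [uIcc_of_le ht.1] at hs
        have hs1 : s < 1 := lt_of_le_of_lt hs.2 ht.2
        simp only [hVeq1 s hs.1 hs1, one_div]
      have h1t : (0:ℝ) < 1 - t := by linarith [ht.2]
      have h1t₁ : (0:ℝ) < 1 - t₁ := by linarith [ht₁.2]
      rw [hlam t]
      calc Real.exp (-(∫ s in (0:ℝ)..t, 1/(V s - s)))
          ≤ Real.exp (Real.log (1 - t) - Real.log (1 - t₁)) := by
            apply Real.exp_le_exp.2
            rw [h2] at hsplit
            linarith
      _ = (1 - t)/(1 - t₁) := by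
            rw [Real.exp_sub, Real.exp_log h1t, Real.exp_log h1t₁]
    have hlam_sq0 : Tendsto (fun t => lam t ^ 2) (𝓝[<] (1:ℝ)) (𝓝 0) := by
      have hub : Tendsto (fun t => ((1 - t)/(1 - t₁))^2) (𝓝[<] (1:ℝ)) (𝓝 0) := by
        have h1 : Tendsto (fun t : ℝ => 1 - t) (𝓝[<] (1:ℝ)) (𝓝 0) :=
          one_sub_tendsto.mono_right nhdsWithin_le_nhds
        have h0 := h1.div_const (1 - t₁)
        have h2 := h0.pow 2
        simpa using h2
      apply tendsto_of_tendsto_of_tendsto_of_le_of_le' tendsto_const_nhds hub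
      · apply Filter.Eventually.of_forall; intro t; positivity
      · filter_upwards [Ioo_mem_nhdsLT_of_mem
          (show (1:ℝ) ∈ Ioc t₁ 1 from ⟨ht₁.2, le_rfl⟩)] with t ht
        exact pow_le_pow_left₀ (le_of_lt (hlampos t)) (hlam_bd t ⟨le_of_lt ht.1, ht.2⟩) 2
    by_cases hg : ∀ t ∈ Ico (0:ℝ) 1,
        IntervalIntegrable (fun s => (1 + σ s ^ 2)/lam s ^ 2) volume 0 t
    · -- g locally integrable : Lam → ∞
      have hLlb : ∀ t, t ∈ Ico t₁ 1 →
          (1 - t₁)^2 * ((1 - t)⁻¹ - (1 - t₁)⁻¹) ≤ Lam t := by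
        intro t ht
        have ht0 : (0:ℝ) ≤ t := le_trans ht₁.1 ht.1
        have h1t₁ : (0:ℝ) < 1 - t₁ := by linarith [ht₁.2]
        have hg0t := hg t ⟨ht0, ht.2⟩
        have hg0t₁ := hg t₁ ht₁
        have hgt₁t : IntervalIntegrable (fun s => (1 + σ s ^ 2)/lam s ^ 2) volume t₁ t := by
          apply hg0t.mono_set
          rw [uIcc_of_le ht.1, uIcc_of_le ht0]
          exact Icc_subset_Icc ht₁.1 le_rfl
        have hsplit := intervalIntegral.integral_add_adjacent_intervals hg0t₁ hgt₁t
        have hfirst : 0 ≤ ∫ s in (0:ℝ)..t₁, (1 + σ s ^ 2)/lam s ^ 2 :=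
          intervalIntegral.integral_nonneg ht₁.1 (fun u _ => hgnn u)
        have hcont2 : ContinuousOn (fun u : ℝ => (1 - t₁)^2 * ((1 - u)⁻¹)^2) (uIcc t₁ t) := by
          rw [uIcc_of_le ht.1]
          apply ContinuousOn.mul continuousOn_const
          apply ContinuousOn.pow
          apply ((continuous_const.sub continuous_id).continuousOn).inv₀
          intro u hu
          have : u < 1 := lt_of_le_of_lt hu.2 ht.2
          simp only [Pi.sub_apply, id_eq]
          intro hcon
          linarith
        have hcomp := intervalIntegral.integral_mono_on ht.1 hcont2.intervalIntegrable
          hgt₁t ?_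
        · have hval : ∫ u in t₁..t, (1 - t₁)^2 * ((1 - u)⁻¹)^2
              = (1 - t₁)^2 * ((1 - t)⁻¹ - (1 - t₁)⁻¹) := by
            rw [intervalIntegral.integral_const_mul, int_one_sub_inv_sq t₁ t ht.1 ht.2]
          rw [hval] at hcomp
          rw [hLam]
          linarith
        · intro u hu
          have hu1 : u < 1 := lt_of_le_of_lt hu.2 ht.2
          have h1u : (0:ℝ) < 1 - u := by linarith
          have hbd := hlam_bd u ⟨hu.1, hu1⟩
          have hlp := hlampos u
          rw [le_div_iff₀ (pow_pos hlp 2)]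
          have hsq : lam u ^ 2 ≤ ((1 - u)/(1 - t₁))^2 :=
            pow_le_pow_left₀ hlp.le hbd 2
          calc (1 - t₁)^2 * ((1 - u)⁻¹)^2 * lam u ^ 2
              ≤ (1 - t₁)^2 * ((1 - u)⁻¹)^2 * ((1 - u)/(1 - t₁))^2 := by
                apply mul_le_mul_of_nonneg_left hsq (by positivity)
          _ = 1 := by field_simp
          _ ≤ 1 + σ u ^ 2 := by nlinarith [sq_nonneg (σ u)]
      have hLaminf : Tendsto Lam (𝓝[<] (1:ℝ)) atTop := by
        have h1t₁ : (0:ℝ) < 1 - t₁ := by linarith [ht₁.2]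
        have h1 : Tendsto (fun t : ℝ => (1 - t)⁻¹ + (-(1 - t₁)⁻¹)) (𝓝[<] (1:ℝ)) atTop :=
          tendsto_atTop_add_const_right _ _ one_sub_tendsto.inv_tendsto_nhdsGT_zero
        have h2 := h1.const_mul_atTop (show (0:ℝ) < (1 - t₁)^2 from pow_pos h1t₁ 2)
        have hbase : Tendsto (fun t : ℝ => (1 - t₁)^2 * ((1 - t)⁻¹ - (1 - t₁)⁻¹))
            (𝓝[<] (1:ℝ)) atTop := by
          apply h2.congr
          intro t
          ring
        apply tendsto_atTop_mono' _ ?_ hbase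
        filter_upwards [Ioo_mem_nhdsLT_of_mem
          (show (1:ℝ) ∈ Ioc t₁ 1 from ⟨ht₁.2, le_rfl⟩)] with t ht
        exact hLlb t ⟨le_of_lt ht.1, ht.2⟩
      exact from_atTop lam Lam ℓ hℓ hlampos hLaminf hlim
    · -- g not locally integrable : Lam ≡ 0 near 1
      push_neg at hg
      obtain ⟨t₂, ht₂, hgn⟩ := hg
      have hLam0 : ∀ᶠ t in 𝓝[<] (1:ℝ), Lam t = 0 := by
        filter_upwards [Ioo_mem_nhdsLT_of_mem
          (show (1:ℝ) ∈ Ioc t₂ 1 from ⟨ht₂.2, le_rfl⟩)] with t ht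
        rw [hLam]
        apply intervalIntegral.integral_undef
        intro hcon
        apply hgn
        apply hcon.mono_set
        rw [uIcc_of_le ht₂.1, uIcc_of_le (le_trans ht₂.1 (le_of_lt ht.1))]
        exact Icc_subset_Icc le_rfl (le_of_lt ht.1)
      constructor
      · have hf : Tendsto (fun t => lam t ^ 2 * ℓ) (𝓝[<] (1:ℝ)) (𝓝 0) := by
          have := hlam_sq0.mul_const ℓ
          simpa using this
        apply Tendsto.congr' ?_ hf
        filter_upwards [hLam0] with t ht
        rw [ht, zero_add]
      · have hf : Tendsto (fun t => lam t ^ 2 * ℓ * Real.log (2 * ℓ))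
            (𝓝[<] (1:ℝ)) (𝓝 0) := by
          have := (hlam_sq0.mul_const ℓ).mul_const (Real.log (2 * ℓ))
          simpa using this
        apply Tendsto.congr' ?_ hf
        filter_upwards [hLam0] with t ht
        rw [ht, zero_add]
end

section
/- Let a : [0,1] × ℝ → ℝ be of class C^{1,2} with a(t,z) ≥ ε > 0 for all (t,z), and suppose a satisfies the nonlinear PDE a_t(t,z) + (a(t,z)²/2) a_zz(t,z) = 0 on [0,1] × ℝ. Then for every (t,x) ∈ [0,1] × ℝ, −∫₀ˣ (a_t(t,y)/a(t,y)²) dy − (1/2) a_z(t,x) = −(1/2) a_z(t,0). In other words, the function b(t,x) := A_t(t,x) − (1/2) a_z(t,x), where A(t,x) := ∫₀ˣ dy/a(t,y) and A_t denotes its partial derivative in t, is constant in x and equals −(1/2) a_z(t,0). -/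
open Real Filter Topology Set MeasureTheory

/-- If `a` is `C^{1,2}` on `[0,1] × ℝ`, bounded below by `ε > 0`, and
satisfies `a_t + (a²/2) a_zz = 0`, then for every `(t,x) ∈ [0,1] × ℝ`,
`-∫₀ˣ a_t(t,y)/a(t,y)² dy - (1/2) a_z(t,x) = -(1/2) a_z(t,0)`, i.e. the function
`b(t,x) = A_t(t,x) - (1/2) a_z(t,x)` is constant in `x`. -/
theorem stmt_6
    (a at' az azz : ℝ → ℝ → ℝ) (ε : ℝ) (hε : 0 < ε)
    (ha_lb : ∀ t ∈ Icc (0:ℝ) 1, ∀ z : ℝ, ε ≤ a t z)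
    (hat : ∀ t ∈ Icc (0:ℝ) 1, ∀ z : ℝ, HasDerivAt (fun s => a s z) (at' t z) t)
    (haz : ∀ t ∈ Icc (0:ℝ) 1, ∀ z : ℝ, HasDerivAt (fun y => a t y) (az t z) z)
    (hazz : ∀ t ∈ Icc (0:ℝ) 1, ∀ z : ℝ, HasDerivAt (fun y => az t y) (azz t z) z)
    (ha_cont : ContinuousOn (fun p : ℝ × ℝ => a p.1 p.2) (Icc (0:ℝ) 1 ×ˢ univ))
    (hat_cont : ContinuousOn (fun p : ℝ × ℝ => at' p.1 p.2) (Icc (0:ℝ) 1 ×ˢ univ))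
    (haz_cont : ContinuousOn (fun p : ℝ × ℝ => az p.1 p.2) (Icc (0:ℝ) 1 ×ˢ univ))
    (hazz_cont : ContinuousOn (fun p : ℝ × ℝ => azz p.1 p.2) (Icc (0:ℝ) 1 ×ˢ univ))
    (hpde : ∀ t ∈ Icc (0:ℝ) 1, ∀ z : ℝ, at' t z + (a t z) ^ 2 / 2 * azz t z = 0) :
    ∀ t ∈ Icc (0:ℝ) 1, ∀ x : ℝ,
      -(∫ y in (0:ℝ)..x, at' t y / (a t y) ^ 2) - (1 / 2) * az t x
        = -(1 / 2) * az t 0 := by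
  intro t ht x
  have hcont : Continuous (fun y => azz t y) := by
    have : ContinuousOn (fun y : ℝ => azz t y) univ :=
      hazz_cont.comp
        ((continuous_const.prodMk continuous_id).continuousOn :
          ContinuousOn (fun y : ℝ => ((t, y) : ℝ × ℝ)) univ)
        (fun y _ => by simp [ht])
    simpa [continuousOn_univ] using this
  have hne : ∀ y : ℝ, a t y ≠ 0 := fun y =>
    ne_of_gt (lt_of_lt_of_le hε (ha_lb t ht y))
  have heq : (∫ y in (0:ℝ)..x, at' t y / (a t y) ^ 2)
      = ∫ y in (0:ℝ)..x, -(1/2) * azz t y := by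
    apply intervalIntegral.integral_congr
    intro y _
    have h := hpde t ht y
    have hane := pow_ne_zero 2 (hne y)
    rw [div_eq_iff hane]
    linear_combination h
  have hFTC : (∫ y in (0:ℝ)..x, azz t y) = az t x - az t 0 := by
    apply intervalIntegral.integral_eq_sub_of_hasDerivAt
    · intro y _; exact hazz t ht y
    · exact (hcont.intervalIntegrable 0 x)
  rw [heq, intervalIntegral.integral_const_mul, hFTC]
  ring
end

section
/- Let k₁, k₂, k₃ > 0 and define a(t,z) := √(k₁ (z+k₂)² + k₃ e^{−k₁ t}) for (t,z) ∈ [0,1] × ℝ. Then a is of class C^{1,2}, satisfies the nonlinear PDE a_t(t,z) + (a(t,z)²/2) a_zz(t,z) = 0 on [0,1] × ℝ, and is uniformly bounded away from zero: a(t,z) ≥ √(k₃ e^{−k₁}) for all (t,z) ∈ [0,1] × ℝ. -/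
open Real Filter Topology Set MeasureTheory

/-- For `k₁, k₂, k₃ > 0`, the function
`a(t,z) = √(k₁ (z+k₂)² + k₃ e^{-k₁ t})` is `C^{1,2}` on `[0,1] × ℝ`
(formalized as joint `C²` smoothness on `[0,1] × ℝ`), satisfies
`a_t + (a²/2) a_zz = 0` there, and `a(t,z) ≥ √(k₃ e^{-k₁})`. -/
theorem stmt_7
    (k₁ k₂ k₃ : ℝ) (hk₁ : 0 < k₁) (hk₂ : 0 < k₂) (hk₃ : 0 < k₃)
    (a : ℝ → ℝ → ℝ)
    (ha : ∀ t z, a t z = Real.sqrt (k₁ * (z + k₂) ^ 2 + k₃ * Real.exp (-k₁ * t))) :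
    ContDiffOn ℝ 2 (fun p : ℝ × ℝ => a p.1 p.2) (Icc (0:ℝ) 1 ×ˢ (univ : Set ℝ)) ∧
    (∀ t ∈ Icc (0:ℝ) 1, ∀ z : ℝ,
      deriv (fun s => a s z) t
        + (a t z) ^ 2 / 2 * deriv (deriv (fun y => a t y)) z = 0) ∧
    (∀ t ∈ Icc (0:ℝ) 1, ∀ z : ℝ, Real.sqrt (k₃ * Real.exp (-k₁)) ≤ a t z) := by
  have hu : ∀ t z : ℝ, 0 < k₁ * (z + k₂) ^ 2 + k₃ * Real.exp (-k₁ * t) := by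
    intro t z
    have h1 := Real.exp_pos (-k₁ * t)
    nlinarith [sq_nonneg (z + k₂)]
  refine ⟨?_, ?_, ?_⟩
  · -- smoothness
    have heq : (fun p : ℝ × ℝ => a p.1 p.2)
        = fun p : ℝ × ℝ => Real.sqrt (k₁ * (p.2 + k₂) ^ 2 + k₃ * Real.exp (-k₁ * p.1)) := by
      funext p; exact ha p.1 p.2
    rw [heq]
    intro p _
    apply ContDiffAt.contDiffWithinAt
    have hf : ContDiffAt ℝ 2
        (fun p : ℝ × ℝ => k₁ * (p.2 + k₂) ^ 2 + k₃ * Real.exp (-k₁ * p.1)) p := by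
      apply ContDiffAt.add
      · exact (contDiffAt_const.mul (((contDiffAt_snd).add contDiffAt_const).pow 2))
      · exact contDiffAt_const.mul ((contDiffAt_const.mul contDiffAt_fst).exp)
    exact (Real.contDiffAt_sqrt (hu p.1 p.2).ne').comp p hf
  · -- the PDE
    intro t ht z
    set E : ℝ := Real.exp (-k₁ * t) with hE
    have hroot : ∀ y : ℝ,
        HasDerivAt (fun y => Real.sqrt (k₁ * (y + k₂) ^ 2 + k₃ * E))
          (k₁ * (2 * (y + k₂)) / (2 * Real.sqrt (k₁ * (y + k₂) ^ 2 + k₃ * E))) y := by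
      intro y
      have h1 : HasDerivAt (fun y : ℝ => (y + k₂) ^ 2) (2 * (y + k₂)) y := by
        simpa using ((hasDerivAt_id y).add_const k₂).fun_pow 2
      have hg : HasDerivAt (fun y => k₁ * (y + k₂) ^ 2 + k₃ * E) (k₁ * (2 * (y + k₂))) y :=
        (h1.const_mul k₁).add_const (k₃ * E)
      exact hg.sqrt (hu t y).ne'
    -- t-derivative
    have hfz : (fun s => a s z) = fun s => Real.sqrt (k₁ * (z + k₂) ^ 2 + k₃ * Real.exp (-k₁ * s)) := by
      funext s; exact ha s z
    have hexp : HasDerivAt (fun s : ℝ => k₁ * (z + k₂) ^ 2 + k₃ * Real.exp (-k₁ * s))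
        (k₃ * (Real.exp (-k₁ * t) * -k₁)) t := by
      have h2 : HasDerivAt (fun s : ℝ => -k₁ * s) (-k₁) t := by
        simpa using (hasDerivAt_id t).const_mul (-k₁)
      exact ((h2.exp).const_mul k₃).const_add (k₁ * (z + k₂) ^ 2)
    have hdt : deriv (fun s => a s z) t
        = k₃ * (E * -k₁) / (2 * Real.sqrt (k₁ * (z + k₂) ^ 2 + k₃ * E)) := by
      rw [hfz]
      exact (hexp.sqrt (hu t z).ne').deriv
    -- z-derivative function
    have hfy : (fun y => a t y) = fun y => Real.sqrt (k₁ * (y + k₂) ^ 2 + k₃ * E) := by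
      funext y; exact ha t y
    have hd1 : deriv (fun y => a t y)
        = fun y => k₁ * (2 * (y + k₂)) / (2 * Real.sqrt (k₁ * (y + k₂) ^ 2 + k₃ * E)) := by
      rw [hfy]; funext y; exact (hroot y).deriv
    -- second z-derivative
    set s : ℝ := Real.sqrt (k₁ * (z + k₂) ^ 2 + k₃ * E) with hs
    have hspos : 0 < s := Real.sqrt_pos.mpr (hu t z)
    have hs2 : s ^ 2 = k₁ * (z + k₂) ^ 2 + k₃ * E := Real.sq_sqrt (hu t z).le
    have hnum : HasDerivAt (fun y : ℝ => k₁ * (2 * (y + k₂))) (k₁ * 2) z := by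
      simpa using (((hasDerivAt_id z).add_const k₂).const_mul 2).const_mul k₁
    have hden : HasDerivAt (fun y : ℝ => 2 * Real.sqrt (k₁ * (y + k₂) ^ 2 + k₃ * E))
        (2 * (k₁ * (2 * (z + k₂)) / (2 * s))) z := (hroot z).const_mul 2
    have hdb : HasDerivAt
        (fun y => k₁ * (2 * (y + k₂)) / (2 * Real.sqrt (k₁ * (y + k₂) ^ 2 + k₃ * E)))
        ((k₁ * 2 * (2 * s) - k₁ * (2 * (z + k₂)) * (2 * (k₁ * (2 * (z + k₂)) / (2 * s))))
          / (2 * s) ^ 2) z := by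
      exact hnum.div hden (by positivity)
    have hdd : deriv (deriv (fun y => a t y)) z
        = (k₁ * 2 * (2 * s) - k₁ * (2 * (z + k₂)) * (2 * (k₁ * (2 * (z + k₂)) / (2 * s))))
          / (2 * s) ^ 2 := by
      rw [hd1]; exact hdb.deriv
    have haz : a t z = s := ha t z
    rw [hdt, hdd, haz]
    have hsne : s ≠ 0 := hspos.ne'
    field_simp
    linear_combination k₁ * hs2
  · -- lower bound
    intro t ht z
    rw [ha]
    apply Real.sqrt_le_sqrt
    have hexp : Real.exp (-k₁) ≤ Real.exp (-k₁ * t) := by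
      apply Real.exp_le_exp.mpr
      nlinarith [ht.1, ht.2]
    nlinarith [sq_nonneg (z + k₂)]
end

section
/- Let f : ℝ → ℝ be continuously differentiable and strictly increasing, and suppose there exist constants k₁, k₂ > 0 such that |f(y)| ≤ k₁ e^{k₂ |y|} for all y ∈ ℝ. Fix v > 0 and define F(m) := ∫_ℝ f(y) q(v, m, y) dy for m ∈ ℝ. Then F is differentiable with F′(m) = ∫_ℝ f′(y) q(v, m, y) dy > 0 for every m; in particular F is strictly increasing. -/
open Real Filter Topology Set MeasureTheory

/-- The Gaussian heat kernel `q(t,x,y) = (2πt)^{-1/2} exp(-(x-y)²/(2t))`. -/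
noncomputable def q (t x y : ℝ) : ℝ :=
  (Real.sqrt (2 * Real.pi * t))⁻¹ * Real.exp (-(x - y) ^ 2 / (2 * t))


lemma q_pos {v : ℝ} (hv : 0 < v) (x y : ℝ) : 0 < q v x y := by
  have : 0 < Real.sqrt (2 * Real.pi * v) := Real.sqrt_pos.mpr (by positivity)
  unfold q; positivity

lemma q_symm (v x y : ℝ) : q v x y = q v y x := by
  unfold q; rw [show (y - x)^2 = (x - y)^2 by ring]

lemma hasDerivAt_q_fst (v : ℝ) (x y : ℝ) :
    HasDerivAt (fun x => q v x y) ((y - x) / v * q v x y) x := by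
  unfold q
  have h1 : HasDerivAt (fun x : ℝ => -(x - y) ^ 2 / (2 * v)) ((y - x) / v) x := by
    have h : HasDerivAt (fun x : ℝ => -(x - y) ^ 2 / (2 * v)) ((-(2 * (x-y)^1 * 1)) / (2*v)) x :=
      (((hasDerivAt_id x).sub_const y).pow 2).neg.div_const _
    convert h using 1
    rcases eq_or_ne v 0 with h0 | h0
    · simp [h0]
    · field_simp; ring
  have h2 := h1.exp.const_mul (Real.sqrt (2 * Real.pi * v))⁻¹
  exact h2.congr_deriv (by ring)

lemma exp_bound_aux {v : ℝ} (hv : 0 < v) {k R x y : ℝ} (hk : 0 ≤ k) (hx : |x| ≤ R) :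
    Real.exp (k * |y|) * Real.exp (-(x - y) ^ 2 / (2 * v)) ≤
      Real.exp (4 * v * k ^ 2 + R ^ 2 / (2 * v)) * Real.exp (-y ^ 2 / (8 * v)) := by
  rw [← Real.exp_add, ← Real.exp_add]
  apply Real.exp_le_exp.mpr
  have hx2 : x ^ 2 ≤ R ^ 2 := by nlinarith [abs_nonneg x, sq_abs x]
  have hi : k * |y| ≤ 4 * v * k ^ 2 + y ^ 2 / (16 * v) := by
    rw [← sub_nonneg]
    have e : y ^ 2 / (16 * v) * (16 * v) = y ^ 2 := by field_simp
    have h : 0 ≤ (4 * v * k ^ 2 + y ^ 2 / (16 * v) - k * |y|) * (16 * v) := by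
      nlinarith [sq_nonneg (8 * v * k - |y|), sq_abs y]
    exact le_of_mul_le_mul_right (by rw [zero_mul]; exact h) (by linarith)
  have hii : -(x - y) ^ 2 / (2 * v) ≤ R ^ 2 / (2 * v) - y ^ 2 / (4 * v) := by
    rw [← sub_nonneg]
    have h : 0 ≤ (R ^ 2 / (2 * v) - y ^ 2 / (4 * v) - -(x - y) ^ 2 / (2 * v)) * (4 * v) := by
      have e1 : R ^ 2 / (2 * v) * (4 * v) = 2 * R ^ 2 := by field_simp; ring
      have e2 : y ^ 2 / (4 * v) * (4 * v) = y ^ 2 := by field_simp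
      have e3 : -(x - y) ^ 2 / (2 * v) * (4 * v) = -(2 * (x - y) ^ 2) := by field_simp; ring
      nlinarith [sq_nonneg (2 * x - y)]
    exact le_of_mul_le_mul_right (by rw [zero_mul]; exact h) (by linarith)
  have hiii : y ^ 2 / (16 * v) - y ^ 2 / (4 * v) ≤ -y ^ 2 / (8 * v) := by
    have e1 : y ^ 2 / (4 * v) = 4 * (y ^ 2 / (16 * v)) := by field_simp; ring
    have e2 : -y ^ 2 / (8 * v) = -(2 * (y ^ 2 / (16 * v))) := by field_simp; ring
    have h : 0 ≤ y ^ 2 / (16 * v) := by positivity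
    linarith
  linarith

lemma integrable_gauss {v : ℝ} (hv : 0 < v) (D : ℝ) :
    Integrable (fun y : ℝ => D * Real.exp (-y ^ 2 / (8 * v))) := by
  have h : Integrable (fun y : ℝ => Real.exp (-(1 / (8 * v)) * y ^ 2)) :=
    integrable_exp_neg_mul_sq (by positivity)
  have := h.const_mul D
  convert this using 2 with y
  ring_nf

lemma continuous_q (v x : ℝ) : Continuous (fun y => q v x y) := by
  unfold q; fun_prop

lemma continuous_q' (v y : ℝ) : Continuous (fun x => q v x y) := by
  unfold q; fun_prop

lemma bound_fq {v k₁ k₂ : ℝ} (hv : 0 < v) (hk₂ : 0 ≤ k₂) {f : ℝ → ℝ}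
    (hgrowth : ∀ y, |f y| ≤ k₁ * Real.exp (k₂ * |y|)) (R : ℝ) :
    ∃ D : ℝ, 0 ≤ D ∧ ∀ x y : ℝ, |x| ≤ R →
      |f y * q v x y| ≤ D * Real.exp (-y ^ 2 / (8 * v)) := by
  have hk₁ : 0 ≤ k₁ := by
    have h := (abs_nonneg (f 0)).trans (hgrowth 0)
    nlinarith [Real.exp_pos (k₂ * |(0:ℝ)|)]
  set c := (Real.sqrt (2 * Real.pi * v))⁻¹ with hc
  have hc0 : 0 < c := by
    have : 0 < Real.sqrt (2 * Real.pi * v) := Real.sqrt_pos.mpr (by positivity)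
    positivity
  refine ⟨k₁ * c * Real.exp (4 * v * k₂ ^ 2 + R ^ 2 / (2 * v)), by positivity, fun x y hx => ?_⟩
  have hq : q v x y = c * Real.exp (-(x - y) ^ 2 / (2 * v)) := rfl
  rw [abs_mul, abs_of_pos (q_pos hv x y), hq]
  calc |f y| * (c * Real.exp (-(x - y) ^ 2 / (2 * v)))
      ≤ (k₁ * Real.exp (k₂ * |y|)) * (c * Real.exp (-(x - y) ^ 2 / (2 * v))) := by
        apply mul_le_mul_of_nonneg_right (hgrowth y) (by positivity)
    _ = (k₁ * c) * (Real.exp (k₂ * |y|) * Real.exp (-(x - y) ^ 2 / (2 * v))) := by ring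
    _ ≤ (k₁ * c) * (Real.exp (4 * v * k₂ ^ 2 + R ^ 2 / (2 * v)) * Real.exp (-y ^ 2 / (8 * v))) := by
        apply mul_le_mul_of_nonneg_left (exp_bound_aux hv hk₂ hx) (by positivity)
    _ = k₁ * c * Real.exp (4 * v * k₂ ^ 2 + R ^ 2 / (2 * v)) * Real.exp (-y ^ 2 / (8 * v)) := by ring

lemma bound_fq' {v k₁ k₂ : ℝ} (hv : 0 < v) (hk₂ : 0 ≤ k₂) {f : ℝ → ℝ}
    (hgrowth : ∀ y, |f y| ≤ k₁ * Real.exp (k₂ * |y|)) (R : ℝ) (hR : 0 ≤ R) :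
    ∃ D : ℝ, 0 ≤ D ∧ ∀ x y : ℝ, |x| ≤ R →
      |f y * ((y - x) / v * q v x y)| ≤ D * Real.exp (-y ^ 2 / (8 * v)) := by
  have hk₁ : 0 ≤ k₁ := by
    have h := (abs_nonneg (f 0)).trans (hgrowth 0)
    nlinarith [Real.exp_pos (k₂ * |(0:ℝ)|)]
  set c := (Real.sqrt (2 * Real.pi * v))⁻¹ with hc
  have hc0 : 0 < c := by
    have : 0 < Real.sqrt (2 * Real.pi * v) := Real.sqrt_pos.mpr (by positivity)
    positivity
  refine ⟨k₁ * (1 + R) / v * c * Real.exp (4 * v * (k₂ + 1) ^ 2 + R ^ 2 / (2 * v)),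
    by positivity, fun x y hx => ?_⟩
  have hq : q v x y = c * Real.exp (-(x - y) ^ 2 / (2 * v)) := rfl
  have habs : |y - x| ≤ (1 + R) * Real.exp |y| := by
    have h1 : |y - x| ≤ |y| + |x| := abs_sub _ _
    have h2 : |y| ≤ Real.exp |y| := by
      have := Real.add_one_le_exp |y|
      linarith
    have h3 : (1:ℝ) ≤ Real.exp |y| := Real.one_le_exp (abs_nonneg y)
    nlinarith [abs_nonneg y, abs_nonneg x]
  rw [abs_mul, abs_mul, abs_div, abs_of_pos hv, abs_of_pos (q_pos hv x y), hq]
  calc |f y| * (|y - x| / v * (c * Real.exp (-(x - y) ^ 2 / (2 * v))))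
      ≤ (k₁ * Real.exp (k₂ * |y|)) * ((1 + R) * Real.exp |y| / v *
          (c * Real.exp (-(x - y) ^ 2 / (2 * v)))) := by
        apply mul_le_mul (hgrowth y) _ (by positivity) (by positivity)
        apply mul_le_mul_of_nonneg_right _ (by positivity)
        exact div_le_div_of_nonneg_right habs hv.le
    _ = (k₁ * (1 + R) / v * c) * (Real.exp ((k₂ + 1) * |y|) * Real.exp (-(x - y) ^ 2 / (2 * v))) := by
        rw [show (k₂ + 1) * |y| = k₂ * |y| + |y| by ring, Real.exp_add]
        ring
    _ ≤ (k₁ * (1 + R) / v * c) * (Real.exp (4 * v * (k₂ + 1) ^ 2 + R ^ 2 / (2 * v)) *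
          Real.exp (-y ^ 2 / (8 * v))) := by
        apply mul_le_mul_of_nonneg_left (exp_bound_aux hv (by linarith) hx) (by positivity)
    _ = k₁ * (1 + R) / v * c * Real.exp (4 * v * (k₂ + 1) ^ 2 + R ^ 2 / (2 * v)) *
          Real.exp (-y ^ 2 / (8 * v)) := by ring

/-- derivative of `y ↦ q v m y`. -/
lemma hasDerivAt_q_snd (v m y : ℝ) :
    HasDerivAt (fun y => q v m y) ((m - y) / v * q v m y) y := by
  have h := hasDerivAt_q_fst v y m
  have he : (fun y => q v y m) = (fun y => q v m y) := by
    funext z; rw [q_symm]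
  rw [he] at h
  rwa [q_symm v y m] at h

lemma key_ibp {v k₁ k₂ : ℝ} (hv : 0 < v) (hk₂ : 0 ≤ k₂) {f f' : ℝ → ℝ}
    (hf : ∀ y : ℝ, HasDerivAt f (f' y) y) (hf'_cont : Continuous f')
    (hf'_nonneg : ∀ y, 0 ≤ f' y)
    (hgrowth : ∀ y, |f y| ≤ k₁ * Real.exp (k₂ * |y|)) (m : ℝ) :
    Integrable (fun y => f' y * q v m y) ∧
      ∫ y : ℝ, f' y * q v m y = ∫ y : ℝ, f y * ((y - m) / v * q v m y) := by
  have hf_cont : Continuous f := by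
    rw [continuous_iff_continuousAt]; exact fun y => (hf y).continuousAt
  obtain ⟨D, hD0, hD⟩ := bound_fq hv hk₂ hgrowth |m|
  obtain ⟨D', hD'0, hD'⟩ := bound_fq' hv hk₂ hgrowth |m| (abs_nonneg m)
  -- integrability of f * ((y-m)/v * q)
  have hg_cont : Continuous (fun y => f y * ((y - m) / v * q v m y)) := by
    apply hf_cont.mul (Continuous.mul (by fun_prop) (continuous_q v m))
  have hg_int : Integrable (fun y => f y * ((y - m) / v * q v m y)) :=
    (integrable_gauss hv D').mono' hg_cont.aestronglyMeasurable
      (ae_of_all _ fun y => by rw [Real.norm_eq_abs]; exact hD' m y (le_refl _))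
  have hfq_cont : Continuous (fun y => f' y * q v m y) :=
    hf'_cont.mul (continuous_q v m)
  -- interval IBP identity
  have ibp : ∀ a b : ℝ, ∫ y in a..b, f' y * q v m y =
      f b * q v m b - f a * q v m a + ∫ y in a..b, f y * ((y - m) / v * q v m y) := by
    intro a b
    have h := intervalIntegral.integral_deriv_mul_eq_sub_of_hasDerivAt
      (u := f) (v := fun y => q v m y) (u' := f') (v' := fun y => (m - y) / v * q v m y)
      (hf_cont.continuousOn) ((continuous_q v m).continuousOn)
      (fun x _ => hf x) (fun x _ => hasDerivAt_q_snd v m x)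
      (hf'_cont.intervalIntegrable a b)
      ((Continuous.mul (by fun_prop) (continuous_q v m)).intervalIntegrable a b)
    have hsplit : ∫ y in a..b, (f' y * q v m y + f y * ((m - y) / v * q v m y)) =
        (∫ y in a..b, f' y * q v m y) + ∫ y in a..b, f y * ((m - y) / v * q v m y) :=
      intervalIntegral.integral_add (hfq_cont.intervalIntegrable a b)
        ((hf_cont.mul ((by fun_prop : Continuous fun y : ℝ => (m - y) / v).mul
          (continuous_q v m))).intervalIntegrable a b)
    have hneg : ∫ y in a..b, f y * ((m - y) / v * q v m y) =
        - ∫ y in a..b, f y * ((y - m) / v * q v m y) := by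
      rw [← intervalIntegral.integral_neg]
      congr 1; funext y; ring
    rw [hsplit, hneg] at h
    linarith
  -- integrability of f' * q
  have hnonneg : ∀ y, 0 ≤ f' y * q v m y := fun y =>
    mul_nonneg (hf'_nonneg y) (q_pos hv m y).le
  have habs_int := hg_int.abs
  set I : ℝ := 2 * D + ∫ y : ℝ, |f y * ((y - m) / v * q v m y)| with hI
  have hint : Integrable (fun y => f' y * q v m y) := by
    apply integrable_of_intervalIntegral_norm_bounded (l := atTop)
      (a := fun n : ℕ => -(n : ℝ)) (b := fun n : ℕ => (n : ℝ)) I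
      (fun n => hfq_cont.integrableOn_Ioc)
      (tendsto_neg_atBot_iff.mpr tendsto_natCast_atTop_atTop)
      tendsto_natCast_atTop_atTop
    filter_upwards with n
    have hab : -(n : ℝ) ≤ (n : ℝ) := by have := Nat.cast_nonneg (α := ℝ) n; linarith
    have heq : (∫ y in (-(n:ℝ))..(n:ℝ), ‖f' y * q v m y‖) =
        ∫ y in (-(n:ℝ))..(n:ℝ), f' y * q v m y := by
      congr 1; funext y
      rw [Real.norm_eq_abs, abs_of_nonneg (hnonneg y)]
    rw [heq, ibp]
    have h1 : f (n:ℝ) * q v m (n:ℝ) ≤ D := by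
      have := (le_abs_self _).trans (hD m (n:ℝ) (le_refl _))
      have hle : Real.exp (-(n:ℝ) ^ 2 / (8 * v)) ≤ 1 := by
        rw [Real.exp_le_one_iff]
        have h0 : (0:ℝ) ≤ (n:ℝ)^2 := sq_nonneg _
        apply div_nonpos_of_nonpos_of_nonneg (by linarith) (by linarith)
      nlinarith [Real.exp_pos (-(n:ℝ) ^ 2 / (8 * v))]
    have h2 : -D ≤ f (-(n:ℝ)) * q v m (-(n:ℝ)) := by
      have habs := hD m (-(n:ℝ)) (le_refl _)
      have hle : Real.exp (-(-(n:ℝ)) ^ 2 / (8 * v)) ≤ 1 := by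
        rw [Real.exp_le_one_iff]
        have h0 : (0:ℝ) ≤ (-(n:ℝ))^2 := sq_nonneg _
        apply div_nonpos_of_nonpos_of_nonneg (by linarith) (by linarith)
      have hDe : D * Real.exp (-(-(n:ℝ)) ^ 2 / (8 * v)) ≤ D := by nlinarith
      have hnn := neg_abs_le (f (-(n:ℝ)) * q v m (-(n:ℝ)))
      linarith [habs.trans hDe]
    have h3 : (∫ y in (-(n:ℝ))..(n:ℝ), f y * ((y - m) / v * q v m y)) ≤
        ∫ y : ℝ, |f y * ((y - m) / v * q v m y)| := by
      have hstep : (∫ y in (-(n:ℝ))..(n:ℝ), f y * ((y - m) / v * q v m y)) ≤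
          ∫ y in (-(n:ℝ))..(n:ℝ), |f y * ((y - m) / v * q v m y)| := by
        apply intervalIntegral.integral_mono_on hab
          (hg_cont.intervalIntegrable _ _) ((hg_cont.abs).intervalIntegrable _ _)
        exact fun y _ => le_abs_self _
      have hstep2 : (∫ y in (-(n:ℝ))..(n:ℝ), |f y * ((y - m) / v * q v m y)|) ≤
          ∫ y : ℝ, |f y * ((y - m) / v * q v m y)| := by
        rw [intervalIntegral.integral_of_le hab]
        exact setIntegral_le_integral habs_int (ae_of_all _ fun y => abs_nonneg _)
      linarith
    linarith
  refine ⟨hint, ?_⟩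
  -- limits
  have ha : Tendsto (fun n : ℕ => -(n : ℝ)) atTop atBot :=
    tendsto_neg_atBot_iff.mpr tendsto_natCast_atTop_atTop
  have hb : Tendsto (fun n : ℕ => (n : ℝ)) atTop atTop := tendsto_natCast_atTop_atTop
  have hlim1 := intervalIntegral_tendsto_integral hint ha hb
  have hlim2 := intervalIntegral_tendsto_integral hg_int ha hb
  have hexp0 : Tendsto (fun n : ℕ => D * Real.exp (-(n:ℝ) ^ 2 / (8 * v))) atTop (𝓝 0) := by
    have h1 : Tendsto (fun n : ℕ => (n:ℝ) ^ 2) atTop atTop :=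
      (tendsto_pow_atTop (two_ne_zero)).comp hb
    have h2 : Tendsto (fun n : ℕ => -(n:ℝ) ^ 2 / (8 * v)) atTop atBot := by
      apply Tendsto.atBot_div_const (by positivity)
      exact tendsto_neg_atBot_iff.mpr h1
    have := (Real.tendsto_exp_atBot).comp h2
    have h3 := this.const_mul D
    simpa using h3
  have hb1 : Tendsto (fun n : ℕ => f (n:ℝ) * q v m (n:ℝ)) atTop (𝓝 0) := by
    apply squeeze_zero_norm (fun n => ?_) hexp0
    simpa only [Real.norm_eq_abs] using hD m (n:ℝ) (le_refl _)
  have hb2 : Tendsto (fun n : ℕ => f (-(n:ℝ)) * q v m (-(n:ℝ))) atTop (𝓝 0) := by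
    apply squeeze_zero_norm (fun n => ?_) hexp0
    simpa only [Real.norm_eq_abs, neg_sq] using hD m (-(n:ℝ)) (le_refl _)
  have hcomb : Tendsto (fun n : ℕ => f (n:ℝ) * q v m (n:ℝ) - f (-(n:ℝ)) * q v m (-(n:ℝ))
      + ∫ y in (-(n:ℝ))..(n:ℝ), f y * ((y - m) / v * q v m y)) atTop
      (𝓝 (∫ y : ℝ, f y * ((y - m) / v * q v m y))) := by
    have := ((hb1.sub hb2).add hlim2)
    simpa using this
  have heq : (fun n : ℕ => ∫ y in (-(n:ℝ))..(n:ℝ), f' y * q v m y) =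
      (fun n : ℕ => f (n:ℝ) * q v m (n:ℝ) - f (-(n:ℝ)) * q v m (-(n:ℝ))
        + ∫ y in (-(n:ℝ))..(n:ℝ), f y * ((y - m) / v * q v m y)) := by
    funext n; exact ibp _ _
  rw [heq] at hlim1
  exact tendsto_nhds_unique hlim1 hcomb

/-- Let `f` be `C¹` and strictly increasing with
`|f(y)| ≤ k₁ e^{k₂ |y|}`, and fix `v > 0`. Then `F(m) := ∫ f(y) q(v,m,y) dy` is
differentiable with `F'(m) = ∫ f'(y) q(v,m,y) dy > 0`; in particular `F` is
strictly increasing. -/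
theorem stmt_16
    (f f' : ℝ → ℝ)
    (hf : ∀ y : ℝ, HasDerivAt f (f' y) y) (hf'_cont : Continuous f')
    (hf_mono : StrictMono f)
    (k₁ k₂ : ℝ) (hk₁ : 0 < k₁) (hk₂ : 0 < k₂)
    (hgrowth : ∀ y : ℝ, |f y| ≤ k₁ * Real.exp (k₂ * |y|))
    (v : ℝ) (hv : 0 < v)
    (F : ℝ → ℝ) (hF : ∀ m : ℝ, F m = ∫ y : ℝ, f y * q v m y) :
    (∀ m : ℝ, HasDerivAt F (∫ y : ℝ, f' y * q v m y) m
      ∧ 0 < ∫ y : ℝ, f' y * q v m y)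
    ∧ StrictMono F := by
  have hf_cont : Continuous f := by
    rw [continuous_iff_continuousAt]; exact fun y => (hf y).continuousAt
  have hf'_nonneg : ∀ y, 0 ≤ f' y := by
    intro y
    have h := hasDerivAt_iff_tendsto_slope.mp (hf y)
    refine ge_of_tendsto h ?_
    filter_upwards [self_mem_nhdsWithin] with z hz
    rcases lt_or_gt_of_ne (show z ≠ y from hz) with h1 | h1
    · rw [slope_def_field]
      apply div_nonneg_of_nonpos
      · simp only [sub_nonpos]; exact (hf_mono h1).le
      · linarith
    · rw [slope_def_field]
      apply div_nonneg
      · simp only [sub_nonneg]; exact (hf_mono h1).le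
      · linarith
  have hFeq : F = fun x => ∫ y : ℝ, f y * q v x y := funext hF
  have hmain : ∀ m : ℝ, HasDerivAt (fun x => ∫ y : ℝ, f y * q v x y)
      (∫ y : ℝ, f' y * q v m y) m := by
    intro m
    obtain ⟨-, hDeq⟩ := key_ibp hv hk₂.le hf hf'_cont hf'_nonneg hgrowth m
    obtain ⟨D1, hD10, hD1⟩ := bound_fq hv hk₂.le hgrowth (|m| + 1)
    obtain ⟨D2, hD20, hD2⟩ := bound_fq' hv hk₂.le hgrowth (|m| + 1)
      (by positivity)
    have habs : ∀ x : ℝ, x ∈ Metric.ball m 1 → |x| ≤ |m| + 1 := by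
      intro x hx
      have := Metric.mem_ball.mp hx
      rw [Real.dist_eq] at this
      calc |x| = |x - m + m| := by ring_nf
        _ ≤ |x - m| + |m| := abs_add_le _ _
        _ ≤ |m| + 1 := by linarith
    have h := hasDerivAt_integral_of_dominated_loc_of_deriv_le (μ := volume)
      (x₀ := m) (F := fun x y => f y * q v x y)
      (F' := fun x y => f y * ((y - x) / v * q v x y))
      (bound := fun y => D2 * Real.exp (-y ^ 2 / (8 * v))) (Metric.ball_mem_nhds m zero_lt_one)
      (Eventually.of_forall fun x =>
        (hf_cont.mul (continuous_q v x)).aestronglyMeasurable)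
      ((integrable_gauss hv D1).mono'
        (hf_cont.mul (continuous_q v m)).aestronglyMeasurable
        (ae_of_all _ fun y => by
          rw [Real.norm_eq_abs]
          exact hD1 m y (by linarith [abs_nonneg m])))
      ((hf_cont.mul ((by fun_prop : Continuous fun y : ℝ => (y - m) / v).mul
        (continuous_q v m))).aestronglyMeasurable)
      (ae_of_all _ fun y x hx => by
        rw [Real.norm_eq_abs]
        exact hD2 x y (habs x hx))
      (integrable_gauss hv D2)
      (ae_of_all _ fun y x _ => (hasDerivAt_q_fst v x y).const_mul (f y))
    rw [hDeq]
    exact h.2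
  have hpos : ∀ m : ℝ, 0 < ∫ y : ℝ, f' y * q v m y := by
    intro m
    obtain ⟨hint', -⟩ := key_ibp hv hk₂.le hf hf'_cont hf'_nonneg hgrowth m
    have hnonneg : ∀ y, 0 ≤ f' y * q v m y := fun y =>
      mul_nonneg (hf'_nonneg y) (q_pos hv m y).le
    rw [integral_pos_iff_support_of_nonneg (fun y => hnonneg y) hint']
    have hex : ∃ y, 0 < f' y := by
      by_contra hcon
      push_neg at hcon
      have hzero : ∀ y, f' y = 0 := fun y =>
        le_antisymm (hcon y) (hf'_nonneg y)
      have hlt : f 0 < f 1 := hf_mono (by norm_num)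
      have hconst : f 0 = f 1 := by
        have hdiff : Differentiable ℝ f := fun y => (hf y).differentiableAt
        have hderiv : ∀ y, deriv f y = 0 := fun y => by
          rw [(hf y).deriv]; exact hzero y
        exact is_const_of_deriv_eq_zero hdiff hderiv 0 1
      linarith
    obtain ⟨y₀, hy₀⟩ := hex
    have hsub : {y | 0 < f' y} ⊆ Function.support (fun y => f' y * q v m y) :=
      fun y hy => (mul_pos hy (q_pos hv m y)).ne'
    refine lt_of_lt_of_le ?_ (measure_mono hsub)
    exact (isOpen_lt continuous_const hf'_cont).measure_pos volume ⟨y₀, hy₀⟩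
  constructor
  · intro m
    refine ⟨?_, hpos m⟩
    rw [hFeq]
    exact hmain m
  · apply strictMono_of_deriv_pos
    intro x
    rw [hFeq, (hmain x).deriv]
    exact hpos x
end
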